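/- arXiv:2106.14848 — 11 statements merged into one kernel-verified Lean document; each statement's English description precedes it below -/
import Mathlib

section
/- For every finite simple connected graph G with at least 2 vertices and every positive integer k, the distance-k domination number satisfies γ_k(G) ≤ dim_k(G) + 1. -/
open SimpleGraph Finset

/-- `D` is a distance-`k` dominating set of `G`: every vertex outside `D` is within
distance `k` of some vertex of `D`. -/
def IsKDomSet {V : Type*} (G : SimpleGraph V) (k : ℕ) (D : Finset V) : Prop :=
  ∀ u : V, u ∉ D → ∃ w ∈ D, G.dist u w ≤ k

/-- `R` is a distance-`k` resolving set of `G`: any two distinct vertices are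
distinguished by the truncated distance `d_k(x,y) = min (d(x,y)) (k+1)` to some vertex of `R`. -/
def IsKResSet {V : Type*} (G : SimpleGraph V) (k : ℕ) (R : Finset V) : Prop :=
  ∀ x y : V, x ≠ y → ∃ z ∈ R, min (G.dist x z) (k + 1) ≠ min (G.dist y z) (k + 1)

/-- The distance-`k` domination number `γ_k(G)`. -/
noncomputable def kdom {V : Type*} (G : SimpleGraph V) (k : ℕ) : ℕ :=
  sInf {m : ℕ | ∃ D : Finset V, IsKDomSet G k D ∧ D.card = m}

/-- The distance-`k` dimension `dim_k(G)`. -/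
noncomputable def kdim {V : Type*} (G : SimpleGraph V) (k : ℕ) : ℕ :=
  sInf {m : ℕ | ∃ R : Finset V, IsKResSet G k R ∧ R.card = m}

/-- The distance-`k` location-domination number `γ_L^k(G)`. -/
noncomputable def kld {V : Type*} (G : SimpleGraph V) (k : ℕ) : ℕ :=
  sInf {m : ℕ | ∃ S : Finset V, IsKDomSet G k S ∧ IsKResSet G k S ∧ S.card = m}

/-- For every finite simple connected graph `G` with at least 2 vertices and every
positive integer `k`, `γ_k(G) ≤ dim_k(G) + 1`. -/
theorem stmt_0 {V : Type*} [Fintype V] (G : SimpleGraph V) (hG : G.Connected)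
    (hn : 2 ≤ Fintype.card V) (k : ℕ) (hk : 1 ≤ k) :
    kdom G k ≤ kdim G k + 1 := by
  classical
  have huniv : IsKResSet G k (Finset.univ : Finset V) := by
    intro x y hxy
    refine ⟨x, Finset.mem_univ x, ?_⟩
    have h0 : G.dist x x = 0 := SimpleGraph.dist_self
    have h1 : 0 < G.dist y x := hG.pos_dist_of_ne (Ne.symm hxy)
    simp [h0]
    omega
  have hne : {m : ℕ | ∃ R : Finset V, IsKResSet G k R ∧ R.card = m}.Nonempty :=
    ⟨_, Finset.univ, huniv, rfl⟩
  obtain ⟨R, hR, hcard⟩ := Nat.sInf_mem hne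
  have hkd : kdim G k = R.card := by rw [kdim]; exact hcard.symm
  rw [hkd]
  by_cases hall : ∀ u : V, ∃ z ∈ R, G.dist u z ≤ k
  · have hdom : IsKDomSet G k R := fun u _ => hall u
    have : kdom G k ≤ R.card := Nat.sInf_le ⟨R, hdom, rfl⟩
    omega
  · push_neg at hall
    obtain ⟨u₀, hu₀⟩ := hall
    have hdom : IsKDomSet G k (insert u₀ R) := by
      intro v hv
      by_cases hvz : ∃ z ∈ R, G.dist v z ≤ k
      · obtain ⟨z, hz, hzd⟩ := hvz
        exact ⟨z, Finset.mem_insert_of_mem hz, hzd⟩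
      · push_neg at hvz
        exfalso
        have hvne : v ≠ u₀ := fun h => hv (h ▸ Finset.mem_insert_self u₀ R)
        obtain ⟨z, hz, hd⟩ := hR v u₀ hvne
        have h1 := hvz z hz
        have h2 := hu₀ z hz
        have e1 : min (G.dist v z) (k + 1) = k + 1 := min_eq_right (by omega)
        have e2 : min (G.dist u₀ z) (k + 1) = k + 1 := min_eq_right (by omega)
        exact hd (e1.trans e2.symm)
    have : kdom G k ≤ (insert u₀ R).card := Nat.sInf_le ⟨_, hdom, rfl⟩
    have hins : (insert u₀ R).card ≤ R.card + 1 := Finset.card_insert_le u₀ R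
    omega
end

section
/- For every positive integer k and every positive integer M, there exists a finite simple connected graph G (with at least 2 vertices) such that dim_k(G) ≥ M · γ_k(G); that is, the ratio dim_k(G)/γ_k(G) can be arbitrarily large. -/
open SimpleGraph Finset

-- star graph on Fin n with center 0
def starG (n : ℕ) : SimpleGraph (Fin (n+2)) where
  Adj x y := x ≠ y ∧ (x = 0 ∨ y = 0)
  symm := by constructor; rintro x y ⟨h, h2⟩; exact ⟨h.symm, h2.symm⟩
  loopless := by constructor; rintro x ⟨h, _⟩; exact h rfl

lemma starG_adj (n : ℕ) (x y : Fin (n+2)) :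
    (starG n).Adj x y ↔ x ≠ y ∧ (x = 0 ∨ y = 0) := Iff.rfl

lemma starG_conn (n : ℕ) : (starG n).Connected := by
  rw [connected_iff]
  refine ⟨fun x y => ?_, ⟨0⟩⟩
  by_cases hx : x = 0
  · subst hx
    by_cases hy : y = 0
    · subst hy; exact Reachable.refl _
    · exact (Adj.reachable ((starG_adj n _ _).mpr ⟨fun h => hy h.symm, Or.inl rfl⟩))
  · by_cases hy : y = 0
    · subst hy; exact (Adj.reachable ((starG_adj n _ _).mpr ⟨hx, Or.inr rfl⟩))
    · exact (Adj.reachable ((starG_adj n _ _).mpr ⟨hx, Or.inr rfl⟩)).trans (Adj.reachable ((starG_adj n _ _).mpr ⟨fun h => hy h.symm, Or.inl rfl⟩))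

lemma starG_dist_zero (n : ℕ) (x : Fin (n+2)) (hx : x ≠ 0) : (starG n).dist x 0 = 1 :=
  dist_eq_one_iff_adj.mpr ((starG_adj n _ _).mpr ⟨hx, Or.inr rfl⟩)

lemma starG_dist_leaves (n : ℕ) (x y : Fin (n+2)) (hx : x ≠ 0) (hy : y ≠ 0) (hxy : x ≠ y) :
    (starG n).dist x y = 2 := by
  have hle : (starG n).dist x y ≤ 2 := by
    calc (starG n).dist x y ≤ (starG n).dist x 0 + (starG n).dist 0 y :=
          (starG_conn n).dist_triangle
      _ = 2 := by
          rw [starG_dist_zero n x hx, dist_comm, starG_dist_zero n y hy]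
  have h0 : (starG n).dist x y ≠ 0 := by
    intro h
    exact hxy ((starG_conn n).dist_eq_zero_iff.mp h)
  have h1 : (starG n).dist x y ≠ 1 := by
    intro h
    rcases (starG_adj n x y).mp (dist_eq_one_iff_adj.mp h) with ⟨-, h2 | h2⟩
    · exact hx h2
    · exact hy h2
  omega

/-- For every positive integer `k` and every positive integer `M`, there exists a finite
simple connected graph `G` (with at least 2 vertices) with `dim_k(G) ≥ M · γ_k(G)`. -/
theorem stmt_2 (k : ℕ) (hk : 1 ≤ k) (M : ℕ) (hM : 1 ≤ M) :
    ∃ (n : ℕ) (G : SimpleGraph (Fin n)), 2 ≤ n ∧ G.Connected ∧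
      M * kdom G k ≤ kdim G k := by
  refine ⟨M + 2, starG M, by omega, starG_conn M, ?_⟩
  have hdom : kdom (starG M) k ≤ 1 := by
    apply Nat.sInf_le
    refine ⟨{0}, fun u hu => ⟨0, mem_singleton_self 0, ?_⟩, card_singleton 0⟩
    rw [starG_dist_zero M u (by simpa using hu)]
    exact hk
  have hdim : M ≤ kdim (starG M) k := by
    apply le_csInf
    · -- univ is a resolving set
      refine ⟨_, univ, fun x y hxy => ⟨x, mem_univ x, ?_⟩, rfl⟩
      rw [dist_self]
      have : 0 < (starG M).dist y x := (starG_conn M).pos_dist_of_ne (Ne.symm hxy)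
      simp only [Nat.min_def]
      split_ifs <;> omega
    · rintro m ⟨R, hR, rfl⟩
      by_contra hlt
      push_neg at hlt
      -- leaves not in R
      set L : Finset (Fin (M+2)) := univ.erase 0 with hL
      have hLcard : L.card = M + 1 := by simp [hL]
      have hmiss : 2 ≤ (L \ R).card := by
        have h1 : L.card ≤ (L \ R).card + R.card := by
          calc L.card ≤ (L \ R ∪ R).card := card_le_card (fun x hx => by
                by_cases h : x ∈ R
                · exact mem_union_right _ h
                · exact mem_union_left _ (mem_sdiff.mpr ⟨hx, h⟩))
            _ ≤ (L \ R).card + R.card := card_union_le _ _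
        omega
      obtain ⟨x, hx, y, hy, hxy⟩ := one_lt_card.mp hmiss
      obtain ⟨z, hz, hne⟩ := hR x y hxy
      have hx0 : x ≠ 0 := (mem_erase.mp (mem_sdiff.mp hx).1).1
      have hy0 : y ≠ 0 := (mem_erase.mp (mem_sdiff.mp hy).1).1
      have hzx : z ≠ x := fun h => (mem_sdiff.mp hx).2 (h ▸ hz)
      have hzy : z ≠ y := fun h => (mem_sdiff.mp hy).2 (h ▸ hz)
      apply hne
      by_cases hz0 : z = 0
      · subst hz0
        rw [starG_dist_zero M x hx0, starG_dist_zero M y hy0]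
      · rw [starG_dist_leaves M x z hx0 hz0 (Ne.symm hzx),
            starG_dist_leaves M y z hy0 hz0 (Ne.symm hzy)]
  have hdom1 : 1 ≤ kdom (starG M) k := by
    rcases Nat.eq_zero_or_pos (kdom (starG M) k) with h | h
    · exfalso
      rw [kdom] at h
      rcases (Nat.sInf_eq_zero.mp h) with h' | h'
      · obtain ⟨D, hD, hDc⟩ := h'
        rw [card_eq_zero] at hDc
        subst hDc
        obtain ⟨w, hw, -⟩ := hD 0 (notMem_empty 0)
        exact notMem_empty w hw
      · have : 1 ∈ {m : ℕ | ∃ D : Finset (Fin (M+2)), IsKDomSet (starG M) k D ∧ D.card = m} := by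
          refine ⟨{0}, fun u hu => ⟨0, mem_singleton_self 0, ?_⟩, card_singleton 0⟩
          rw [starG_dist_zero M u (by simpa using hu)]
          exact hk
        rw [h'] at this
        exact this
    · exact h
  have : kdom (starG M) k = 1 := le_antisymm hdom hdom1
  rw [this, mul_one]
  exact hdim
end

section
/- For every finite simple connected graph G of order n ≥ 2 and every positive integer k, one has 2 ≤ γ_k(G) + dim_k(G) ≤ n; moreover, γ_k(G) + dim_k(G) = 2 if and only if G is isomorphic to the path P_i for some i with 2 ≤ i ≤ k + 2. -/
open SimpleGraph Finset

section Aux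

variable {V : Type*}


lemma dist_getVert_le (G : SimpleGraph V) (hG : G.Connected) {u v : V} (p : G.Walk u v) :
    ∀ j : ℕ, G.dist u (p.getVert j) ≤ j := by
  induction p with
  | nil => intro j; simp [SimpleGraph.Walk.getVert, SimpleGraph.dist_self]
  | cons h q ih =>
    intro j
    cases j with
    | zero => simp [SimpleGraph.Walk.getVert_zero]
    | succ j =>
      rw [SimpleGraph.Walk.getVert_cons_succ]
      calc G.dist _ _ ≤ G.dist _ _ + G.dist _ _ := hG.dist_triangle
        _ ≤ 1 + j := by
            gcongr
            · exact le_of_eq (SimpleGraph.dist_eq_one_iff_adj.mpr h)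
            · exact ih j
        _ = j + 1 := by omega

lemma getVert_dist_le (G : SimpleGraph V) (hG : G.Connected) {u v : V} (p : G.Walk u v) :
    ∀ j : ℕ, G.dist (p.getVert j) v ≤ p.length - j := by
  induction p with
  | nil => intro j; simp [SimpleGraph.Walk.getVert, SimpleGraph.dist_self]
  | cons h q ih =>
    intro j
    cases j with
    | zero =>
      simp only [SimpleGraph.Walk.getVert_zero, SimpleGraph.Walk.length_cons, Nat.sub_zero]
      calc G.dist _ _ ≤ G.dist _ _ + G.dist _ _ := hG.dist_triangle
        _ ≤ 1 + q.length := by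
            gcongr
            · exact le_of_eq (SimpleGraph.dist_eq_one_iff_adj.mpr h)
            · exact SimpleGraph.dist_le q
        _ = q.length + 1 := by omega
    | succ j =>
      rw [SimpleGraph.Walk.getVert_cons_succ]
      simpa using ih j

/-- every vertex of a connected graph on ≥ 2 vertices has a neighbor -/
lemma exists_adj (G : SimpleGraph V) [Fintype V] (hG : G.Connected)
    (hn : 2 ≤ Fintype.card V) (v : V) : ∃ w, G.Adj v w := by
  obtain ⟨u, hu⟩ := Fintype.exists_ne_of_one_lt_card hn v
  obtain ⟨p, hp⟩ := hG.exists_walk_length_eq_dist v u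
  cases p with
  | nil => exact absurd rfl hu.symm
  | cons h q => exact ⟨_, h⟩

/-- step down along distance -/
lemma exists_adj_dist (G : SimpleGraph V) (hG : G.Connected) {z v : V} {j : ℕ}
    (h : G.dist z v = j + 1) : ∃ c, G.Adj c v ∧ G.dist z c = j := by
  obtain ⟨p, hp⟩ := hG.exists_walk_length_eq_dist z v
  rw [h] at hp
  refine ⟨p.getVert j, ?_, ?_⟩
  · have hadj := p.adj_getVert_succ (by omega : j < p.length)
    rwa [show j + 1 = p.length by omega, SimpleGraph.Walk.getVert_length] at hadj
  · have h1 : G.dist z (p.getVert j) ≤ j := dist_getVert_le G hG p j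
    have h2 : G.dist z v ≤ G.dist z (p.getVert j) + G.dist (p.getVert j) v := hG.dist_triangle
    have h3 : G.dist (p.getVert j) v ≤ p.length - j := getVert_dist_le G hG p j
    omega

lemma exists_dom_res_compl (G : SimpleGraph V) [Fintype V] [DecidableEq V] (hG : G.Connected)
    (hn : 2 ≤ Fintype.card V) {k : ℕ} (hk : 1 ≤ k) :
    ∃ D : Finset V, IsKDomSet G k D ∧ IsKResSet G k (Finset.univ \ D) ∧
      (∀ D' : Finset V, IsKDomSet G k D' → D.card ≤ D'.card) := by
  classical
  have dcomm : ∀ a b : V, G.dist a b = G.dist b a := fun a b => SimpleGraph.dist_comm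
  have dadj : ∀ a b : V, G.Adj a b → G.dist a b = 1 :=
    fun a b h => SimpleGraph.dist_eq_one_iff_adj.mpr h
  have dadj' : ∀ a b : V, G.dist a b = 1 → G.Adj a b :=
    fun a b h => SimpleGraph.dist_eq_one_iff_adj.mp h
  have dzero : ∀ a b : V, G.dist a b = 0 ↔ a = b := fun a b => hG.dist_eq_zero_iff
  have dtri : ∀ a b c : V, G.dist a c ≤ G.dist a b + G.dist b c :=
    fun a b c => hG.dist_triangle
  set S : Set ℕ := {m : ℕ | ∃ D : Finset V, IsKDomSet G k D ∧ D.card = m} with hS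
  have hSne : S.Nonempty := ⟨(Finset.univ : Finset V).card,
    ⟨Finset.univ, fun u hu => absurd (Finset.mem_univ u) hu, rfl⟩⟩
  set γ := sInf S with hγdef
  have hmin : ∀ D' : Finset V, IsKDomSet G k D' → γ ≤ D'.card :=
    fun D' hD' => Nat.sInf_le ⟨D', hD', rfl⟩
  let isol : Finset V → Finset V := fun D => D.filter (fun x => ∀ b ∈ D, ¬ G.Adj x b)
  set T : Set ℕ := {i : ℕ | ∃ D : Finset V, IsKDomSet G k D ∧ D.card = γ ∧ (isol D).card = i}
    with hT
  have hTne : T.Nonempty := by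
    obtain ⟨D₀, hD₀, hc₀⟩ := Nat.sInf_mem hSne
    exact ⟨(isol D₀).card, D₀, hD₀, hc₀, rfl⟩
  obtain ⟨D, hDdom, hDcard, hDisol⟩ := Nat.sInf_mem hTne
  refine ⟨D, hDdom, ?_, fun D' h => hDcard ▸ hmin D' h⟩
  by_contra hres
  rw [IsKResSet] at hres
  push_neg at hres
  obtain ⟨x, y, hxy, hpair⟩ := hres
  have hpair' : ∀ z : V, z ∉ D →
      min (G.dist x z) (k + 1) = min (G.dist y z) (k + 1) := by
    intro z hz
    exact hpair z (Finset.mem_sdiff.mpr ⟨Finset.mem_univ z, hz⟩)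
  -- both x and y are in D
  have hxD : x ∈ D := by
    by_contra hxD
    have h := hpair' x hxD
    have h0 : G.dist x x = 0 := (dzero x x).mpr rfl
    have h1 : G.dist y x ≠ 0 := fun hc => hxy ((dzero y x).mp hc).symm
    rw [h0] at h
    simp only [Nat.zero_min] at h
    rcases Nat.min_eq_zero_iff.mp h.symm with hc | hc
    · exact h1 hc
    · omega
  have hyD : y ∈ D := by
    by_contra hyD
    have h := hpair' y hyD
    have h0 : G.dist y y = 0 := (dzero y y).mpr rfl
    have h1 : G.dist x y ≠ 0 := fun hc => hxy ((dzero x y).mp hc)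
    rw [h0] at h
    simp only [Nat.min_zero, Nat.zero_min] at h
    rcases Nat.min_eq_zero_iff.mp h with hc | hc
    · exact h1 hc
    · omega
  -- transfer of closeness across the pair
  have htrans : ∀ u : V, u ∉ D → G.dist u x ≤ k → G.dist u y ≤ k := by
    intro u hu hux
    have h := hpair' u hu
    rw [dcomm x u, dcomm y u] at h
    rw [min_eq_left (by omega : G.dist u x ≤ k + 1)] at h
    rcases min_eq_iff.mp h.symm with ⟨h2, _⟩ | ⟨h2, h3⟩ <;> omega
  have htrans' : ∀ u : V, u ∉ D → G.dist u y ≤ k → G.dist u x ≤ k := by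
    intro u hu huy
    have h := hpair' u hu
    rw [dcomm x u, dcomm y u] at h
    rw [min_eq_left (by omega : G.dist u y ≤ k + 1)] at h
    rcases min_eq_iff.mp h with ⟨h2, _⟩ | ⟨h2, h3⟩ <;> omega
  -- self-privacy
  have hpriv : ∀ w : V, (∀ u : V, u ∉ D → G.dist u w ≤ k → ∃ b ∈ D, b ≠ w ∧ G.dist u b ≤ k) →
      w ∈ D → ∀ b ∈ D, b ≠ w → k < G.dist w b := by
    intro w htr hwD b hbD hbw
    by_contra hle
    push_neg at hle
    have herase : IsKDomSet G k (D.erase w) := by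
      intro u hu
      by_cases huw : u = w
      · subst huw
        exact ⟨b, Finset.mem_erase.mpr ⟨hbw, hbD⟩, hle⟩
      · have huD : u ∉ D := fun h => hu (Finset.mem_erase.mpr ⟨huw, h⟩)
        obtain ⟨v, hvD, hv⟩ := hDdom u huD
        by_cases hvw : v = w
        · subst hvw
          obtain ⟨b', hb'D, hb'w, hb'⟩ := htr u huD hv
          exact ⟨b', Finset.mem_erase.mpr ⟨hb'w, hb'D⟩, hb'⟩
        · exact ⟨v, Finset.mem_erase.mpr ⟨hvw, hvD⟩, hv⟩
    have h2 := hmin _ herase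
    rw [Finset.card_erase_of_mem hwD, hDcard] at h2
    have hpos : 0 < γ := hDcard ▸ Finset.card_pos.mpr ⟨w, hwD⟩
    omega
  have hxpriv : ∀ b ∈ D, b ≠ x → k < G.dist x b := by
    refine hpriv x (fun u hu h => ⟨y, hyD, fun h' => hxy h'.symm, htrans u hu h⟩) hxD
  have hypriv : ∀ b ∈ D, b ≠ y → k < G.dist y b := by
    refine hpriv y (fun u hu h => ⟨x, hxD, hxy, htrans' u hu h⟩) hyD
  -- x has a neighbor w; w ∉ D; y also adjacent to w
  obtain ⟨w, hw⟩ := exists_adj G hG hn x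
  have hxw1 : G.dist x w = 1 := dadj x w hw
  have hwD : w ∉ D := by
    intro hwD'
    have h := hxpriv w hwD' (fun h => G.irrefl (h ▸ hw))
    omega
  have hyw1 : G.dist y w = 1 := by
    have h := hpair' w hwD
    rw [hxw1, min_eq_left (by omega : 1 ≤ k + 1)] at h
    rcases min_eq_iff.mp h.symm with ⟨h2, _⟩ | ⟨h2, h3⟩ <;> omega
  have hyw : G.Adj y w := dadj' y w hyw1
  -- k = 1
  have hk1 : k = 1 := by
    have h1 := dtri x w y
    have h2 := hxpriv y hyD (fun h => hxy h.symm)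
    have h3 := dcomm w y
    omega
  -- every neighbor of y is a neighbor of x
  have hNyx : ∀ u : V, G.Adj y u → G.Adj x u := by
    intro u hyu
    have hyu1 : G.dist y u = 1 := dadj y u hyu
    have huD : u ∉ D := by
      intro huD'
      have h := hypriv u huD' (fun h => G.irrefl (h ▸ hyu))
      omega
    have h := hpair' u huD
    rw [hyu1, min_eq_left (by omega : 1 ≤ k + 1)] at h
    refine dadj' x u ?_
    rcases min_eq_iff.mp h with ⟨h2, _⟩ | ⟨h2, h3⟩ <;> omega
  -- the exchange
  set D₁ : Finset V := insert w (D.erase y) with hD₁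
  have hxD₁ : x ∈ D₁ := Finset.mem_insert_of_mem (Finset.mem_erase.mpr ⟨hxy, hxD⟩)
  have hwney : w ≠ y := fun h => G.irrefl (h ▸ hyw)
  have hyD₁ : y ∉ D₁ := by
    simp only [hD₁, Finset.mem_insert, Finset.mem_erase]
    push_neg
    exact ⟨fun h => hwney h.symm, fun h => absurd rfl h⟩
  have hD₁card : D₁.card = γ := by
    rw [hD₁, Finset.card_insert_of_notMem (fun h => hwD (Finset.mem_of_mem_erase h)),
      Finset.card_erase_of_mem hyD, hDcard]
    have hpos : 0 < γ := hDcard ▸ Finset.card_pos.mpr ⟨x, hxD⟩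
    omega
  have hD₁dom : IsKDomSet G k D₁ := by
    intro u hu
    by_cases huy : u = y
    · refine ⟨w, Finset.mem_insert_self _ _, ?_⟩
      rw [huy]
      have := dcomm y w
      omega
    · have huD : u ∉ D := fun h =>
        hu (Finset.mem_insert_of_mem (Finset.mem_erase.mpr ⟨huy, h⟩))
      obtain ⟨v, hvD, hv⟩ := hDdom u huD
      by_cases hvy : v = y
      · subst hvy
        have h0 : G.dist u v ≠ 0 := fun hc => huy ((dzero u v).mp hc)
        have hadj : G.Adj v u := dadj' v u (by rw [dcomm v u]; omega)
        have hxu : G.Adj x u := hNyx u hadj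
        refine ⟨x, hxD₁, ?_⟩
        have := dadj x u hxu
        have := dcomm u x
        omega
      · exact ⟨v, Finset.mem_insert_of_mem (Finset.mem_erase.mpr ⟨hvy, hvD⟩), hv⟩
  -- isolation strictly decreases
  have hyisol : y ∈ isol D := by
    refine Finset.mem_filter.mpr ⟨hyD, fun b hbD hadj => ?_⟩
    have hbney : b ≠ y := fun h => G.irrefl (h ▸ hadj)
    have h := hypriv b hbD hbney
    have := dadj y b hadj
    omega
  have hsub : isol D₁ ⊆ (isol D).erase y := by
    intro v hv
    obtain ⟨hvD₁, hviso⟩ := Finset.mem_filter.mp hv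
    have hvnw : v ≠ w := fun h => (hviso x hxD₁) (h ▸ hw.symm)
    have hvD : v ∈ D ∧ v ≠ y := by
      rcases Finset.mem_insert.mp hvD₁ with h | h
      · exact absurd h hvnw
      · exact ⟨Finset.mem_of_mem_erase h, (Finset.mem_erase.mp h).1⟩
    refine Finset.mem_erase.mpr ⟨hvD.2, Finset.mem_filter.mpr ⟨hvD.1, fun b hbD hadj => ?_⟩⟩
    by_cases hby : b = y
    · subst hby
      exact (hviso x hxD₁) (hNyx v hadj.symm).symm
    · exact (hviso b (Finset.mem_insert_of_mem (Finset.mem_erase.mpr ⟨hby, hbD⟩))) hadj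
  have hlt : (isol D₁).card < (isol D).card := by
    calc (isol D₁).card ≤ ((isol D).erase y).card := Finset.card_le_card hsub
      _ < (isol D).card := by
          rw [Finset.card_erase_of_mem hyisol]
          have : 0 < (isol D).card := Finset.card_pos.mpr ⟨y, hyisol⟩
          omega
  have hle : sInf T ≤ (isol D₁).card := Nat.sInf_le ⟨D₁, hD₁dom, hD₁card, rfl⟩
  rw [hDisol] at hlt
  omega

lemma path_of_res_singleton (G : SimpleGraph V) [Fintype V] [DecidableEq V] (hG : G.Connected)
    {k : ℕ} (hk : 1 ≤ k) (z : V) (hz : IsKResSet G k {z}) :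
    Fintype.card V ≤ k + 2 ∧ Nonempty (G ≃g pathGraph (Fintype.card V)) := by
  classical
  have dcomm : ∀ a b : V, G.dist a b = G.dist b a := fun a b => SimpleGraph.dist_comm
  have dadj : ∀ a b : V, G.Adj a b → G.dist a b = 1 :=
    fun a b h => SimpleGraph.dist_eq_one_iff_adj.mpr h
  have dtri : ∀ a b c : V, G.dist a c ≤ G.dist a b + G.dist b c :=
    fun a b c => hG.dist_triangle
  have hres : ∀ a b : V, min (G.dist a z) (k+1) = min (G.dist b z) (k+1) → a = b := by
    intro a b hab
    by_contra hne
    obtain ⟨z', hz', h⟩ := hz a b hne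
    rw [Finset.mem_singleton] at hz'
    subst hz'
    exact h hab
  set n := Fintype.card V with hn'
  have hcardle : n ≤ k + 2 := by
    have : Function.Injective (fun v : V => (⟨min (G.dist v z) (k+1),
        by have := min_le_right (G.dist v z) (k+1); omega⟩ : Fin (k+2))) := by
      intro a b hab
      exact hres a b (congrArg Fin.val hab)
    simpa using Fintype.card_le_of_injective _ this
  set f : V → ℕ := fun v => G.dist v z with hf
  have hdlt : ∀ v : V, f v < n := by
    intro v
    obtain ⟨p, hpath, hplen⟩ := hG.exists_path_of_dist v z
    rw [hf]
    calc G.dist v z = p.length := hplen.symm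
      _ < n := hpath.length_lt
  have hfinj : Function.Injective f := by
    intro a b hab
    simp only [hf] at hab
    exact hres a b (by rw [hab])
  set φ : V → Fin n := fun v => ⟨f v, hdlt v⟩ with hφ
  have hφbij : Function.Bijective φ := by
    rw [Fintype.bijective_iff_injective_and_card]
    exact ⟨fun a b hab => hfinj (congrArg Fin.val hab), (Fintype.card_fin n).symm⟩
  set e : V ≃ Fin n := Equiv.ofBijective φ hφbij with he
  have hiff : ∀ a b : V, (pathGraph n).Adj (e a) (e b) ↔ G.Adj a b := by
    intro a b
    rw [pathGraph_adj]
    have heav : ∀ a : V, ((e a : Fin n) : ℕ) = f a := fun a => rfl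
    rw [heav, heav]
    constructor
    · rintro (h | h)
      · -- f a + 1 = f b, find predecessor of b
        have hzb : G.dist z b = G.dist a z + 1 := by rw [dcomm z b]; exact h.symm
        obtain ⟨c, hcadj, hcd⟩ := exists_adj_dist G hG hzb
        have : c = a := hfinj (show G.dist c z = G.dist a z by
          have h1 := dcomm c z; omega)
        exact this ▸ hcadj
      · have hza : G.dist z a = G.dist b z + 1 := by rw [dcomm z a]; exact h.symm
        obtain ⟨c, hcadj, hcd⟩ := exists_adj_dist G hG hza
        have : c = b := hfinj (show G.dist c z = G.dist b z by
          have h1 := dcomm c z; omega)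
        exact (this ▸ hcadj).symm
    · intro hab
      have h1 : f a ≤ f b + 1 := by
        have := dtri a b z
        have := dadj a b hab
        simp only [hf] at *
        omega
      have h2 : f b ≤ f a + 1 := by
        have := dtri b a z
        have := dadj b a hab.symm
        simp only [hf] at *
        omega
      have h3 : f a ≠ f b := fun hc => G.irrefl ((hfinj hc) ▸ hab)
      omega
  exact ⟨hcardle, ⟨⟨e, fun {a b} => hiff a b⟩⟩⟩

lemma singletons_of_path_iso (G : SimpleGraph V) [Fintype V] [DecidableEq V]
    (hG : G.Connected) {k : ℕ} (hk : 1 ≤ k) {i : ℕ} (h2 : 2 ≤ i) (hik : i ≤ k + 2)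
    (e : G ≃g pathGraph i) :
    (∃ z : V, IsKResSet G k {z}) ∧ (∃ w : V, IsKDomSet G k {w}) := by
  classical
  have dcomm : ∀ a b : V, G.dist a b = G.dist b a := fun a b => SimpleGraph.dist_comm
  have dadj : ∀ a b : V, G.Adj a b → G.dist a b = 1 :=
    fun a b h => SimpleGraph.dist_eq_one_iff_adj.mpr h
  have dtri : ∀ a b c : V, G.dist a c ≤ G.dist a b + G.dist b c :=
    fun a b c => hG.dist_triangle
  set f : V → ℕ := fun v => ((e v : Fin i) : ℕ) with hf
  have hfinj : Function.Injective f := by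
    intro a b hab
    exact e.toEquiv.injective (Fin.ext hab)
  have hflt : ∀ v : V, f v < i := fun v => (e v).isLt
  have hadj : ∀ a b : V, G.Adj a b ↔ (f a + 1 = f b ∨ f b + 1 = f a) := by
    intro a b
    rw [← e.map_rel_iff, pathGraph_adj]
  have hsymm : ∀ m : ℕ, (hm : m < i) → f (e.symm ⟨m, hm⟩) = m := by
    intro m hm
    simp only [hf]
    rw [RelIso.apply_symm_apply]
  have hup : ∀ m : ℕ, ∀ a b : V, f a + m = f b → G.dist a b ≤ m := by
    intro m
    induction m with
    | zero =>
      intro a b h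
      have hab : a = b := hfinj (by omega)
      rw [hab]
      simp
    | succ m ih =>
      intro a b h
      have hm : f a + m < i := by have := hflt b; omega
      set c : V := e.symm ⟨f a + m, hm⟩ with hc
      have hfc : f c = f a + m := hsymm _ hm
      have h1 : G.dist a c ≤ m := ih a c (by omega)
      have hcb : G.Adj c b := (hadj c b).mpr (Or.inl (by omega))
      have := dtri a c b
      have := dadj c b hcb
      omega
  have hlow : ∀ (a b : V) (p : G.Walk a b), f a ≤ f b + p.length ∧ f b ≤ f a + p.length := by
    intro a b p
    induction p with
    | nil => simp
    | @cons u c b h q ih =>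
      have := (hadj u c).mp h
      simp only [SimpleGraph.Walk.length_cons]
      omega
  have hdist : ∀ a b : V, f a ≤ f b + G.dist a b ∧ f b ≤ f a + G.dist a b := by
    intro a b
    obtain ⟨p, hp⟩ := hG.exists_walk_length_eq_dist a b
    have := hlow a b p
    omega
  constructor
  · -- resolving singleton : the endpoint
    set z : V := e.symm ⟨0, by omega⟩ with hz
    have hfz : f z = 0 := hsymm 0 (by omega)
    have hdz : ∀ v : V, G.dist v z = f v := by
      intro v
      have h1 : G.dist z v ≤ f v := hup (f v) z v (by omega)
      have h2 := (hdist v z).1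
      have := dcomm v z
      omega
    refine ⟨z, fun x y hxy => ⟨z, Finset.mem_singleton_self z, ?_⟩⟩
    rw [hdz x, hdz y, min_eq_left (by have := hflt x; omega), min_eq_left (by have := hflt y; omega)]
    exact fun hc => hxy (hfinj hc)
  · -- dominating singleton : second vertex
    set w : V := e.symm ⟨1, by omega⟩ with hw
    have hfw : f w = 1 := hsymm 1 (by omega)
    refine ⟨w, fun u _ => ⟨w, Finset.mem_singleton_self w, ?_⟩⟩
    by_cases hu0 : f u = 0
    · have := hup 1 u w (by omega)
      omega
    · have h1 : G.dist w u ≤ f u - 1 := hup (f u - 1) w u (by have := hflt u; omega)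
      have h2 := dcomm u w
      have h3 := hflt u
      omega

end Aux

/-- For every finite simple connected graph `G` of order `n ≥ 2` and positive
integer `k`: `2 ≤ γ_k(G) + dim_k(G) ≤ n`, and `γ_k(G) + dim_k(G) = 2` iff `G` is
isomorphic to a path `P_i` with `2 ≤ i ≤ k + 2`. -/
theorem stmt_3 {V : Type*} [Fintype V] (G : SimpleGraph V) (hG : G.Connected)
    (hn : 2 ≤ Fintype.card V) (k : ℕ) (hk : 1 ≤ k) :
    (2 ≤ kdom G k + kdim G k ∧ kdom G k + kdim G k ≤ Fintype.card V) ∧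
    (kdom G k + kdim G k = 2 ↔
      ∃ i : ℕ, 2 ≤ i ∧ i ≤ k + 2 ∧ Nonempty (G ≃g pathGraph i)) := by
  classical
  -- upper bound
  obtain ⟨D, hDdom, hRres, hDmin⟩ := exists_dom_res_compl G hG hn hk
  have hkdom_le : kdom G k ≤ D.card := Nat.sInf_le ⟨D, hDdom, rfl⟩
  have hkdim_le : kdim G k ≤ (Finset.univ \ D).card := Nat.sInf_le ⟨_, hRres, rfl⟩
  have hcard : (Finset.univ \ D).card = Fintype.card V - D.card := by
    rw [Finset.card_sdiff_of_subset (Finset.subset_univ D), Finset.card_univ]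
  have hDle : D.card ≤ Fintype.card V := by
    rw [← Finset.card_univ]; exact Finset.card_le_card (Finset.subset_univ D)
  have hub : kdom G k + kdim G k ≤ Fintype.card V := by omega
  -- univ is resolving
  have huniv_res : IsKResSet G k (Finset.univ : Finset V) := by
    intro x y hxy
    refine ⟨x, Finset.mem_univ x, ?_⟩
    rw [SimpleGraph.dist_self, Nat.zero_min]
    intro hc
    rcases Nat.min_eq_zero_iff.mp hc.symm with hc' | hc'
    · exact hxy (hG.dist_eq_zero_iff.mp hc').symm
    · omega
  -- lower bounds
  have hdomS : {m : ℕ | ∃ D : Finset V, IsKDomSet G k D ∧ D.card = m}.Nonempty :=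
    ⟨D.card, D, hDdom, rfl⟩
  have hdimS : {m : ℕ | ∃ R : Finset V, IsKResSet G k R ∧ R.card = m}.Nonempty :=
    ⟨(Finset.univ : Finset V).card, Finset.univ, huniv_res, rfl⟩
  have hdom1 : 1 ≤ kdom G k := by
    rw [Nat.one_le_iff_ne_zero]
    intro h0
    have hmem := Nat.sInf_mem hdomS
    rw [show sInf {m : ℕ | ∃ D : Finset V, IsKDomSet G k D ∧ D.card = m} = kdom G k from rfl,
      h0] at hmem
    obtain ⟨D', hD', hD'0⟩ := hmem
    rw [Finset.card_eq_zero] at hD'0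
    subst hD'0
    have : Nonempty V := Fintype.card_pos_iff.mp (by omega)
    obtain ⟨v⟩ := this
    obtain ⟨w, hw, -⟩ := hD' v (Finset.notMem_empty v)
    exact Finset.notMem_empty w hw
  have hdim1 : 1 ≤ kdim G k := by
    rw [Nat.one_le_iff_ne_zero]
    intro h0
    have hmem := Nat.sInf_mem hdimS
    rw [show sInf {m : ℕ | ∃ R : Finset V, IsKResSet G k R ∧ R.card = m} = kdim G k from rfl,
      h0] at hmem
    obtain ⟨R', hR', hR'0⟩ := hmem
    rw [Finset.card_eq_zero] at hR'0
    subst hR'0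
    obtain ⟨x, y, hxy⟩ := Fintype.exists_pair_of_one_lt_card hn
    obtain ⟨z, hz, -⟩ := hR' x y hxy
    exact Finset.notMem_empty z hz
  refine ⟨⟨by omega, hub⟩, ?_, ?_⟩
  · -- forward direction
    intro h2
    have hdim_eq : kdim G k = 1 := by omega
    have hmem := Nat.sInf_mem hdimS
    rw [show sInf {m : ℕ | ∃ R : Finset V, IsKResSet G k R ∧ R.card = m} = kdim G k from rfl,
      hdim_eq] at hmem
    obtain ⟨R, hR, hR1⟩ := hmem
    obtain ⟨z, rfl⟩ := Finset.card_eq_one.mp hR1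
    obtain ⟨hle, ⟨iso⟩⟩ := path_of_res_singleton G hG hk z hR
    exact ⟨Fintype.card V, hn, hle, ⟨iso⟩⟩
  · -- backward direction
    rintro ⟨i, h2i, hik, ⟨e⟩⟩
    obtain ⟨⟨z, hz⟩, ⟨w, hw⟩⟩ := singletons_of_path_iso G hG hk h2i hik e
    have h1 : kdim G k ≤ 1 := Nat.sInf_le ⟨{z}, hz, Finset.card_singleton z⟩
    have h2 : kdom G k ≤ 1 := Nat.sInf_le ⟨{w}, hw, Finset.card_singleton w⟩
    omega
end

section
/- For every finite simple connected graph G of order n ≥ 2 and every positive integer k, max{γ_k(G), dim_k(G)} ≤ γ_L^k(G) ≤ min{dim_k(G) + 1, n − 1}. -/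
open SimpleGraph Finset

/-- For every finite simple connected graph `G` of order `n ≥ 2` and positive integer `k`,
`max {γ_k(G), dim_k(G)} ≤ γ_L^k(G) ≤ min {dim_k(G) + 1, n - 1}`. -/
theorem stmt_4 {V : Type*} [Fintype V] (G : SimpleGraph V) (hG : G.Connected)
    (hn : 2 ≤ Fintype.card V) (k : ℕ) (hk : 1 ≤ k) :
    max (kdom G k) (kdim G k) ≤ kld G k ∧
      kld G k ≤ min (kdim G k + 1) (Fintype.card V - 1) := by
  classical
  obtain ⟨v⟩ : Nonempty V := Fintype.card_pos_iff.mp (by omega)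
  -- v has a neighbor
  obtain ⟨u, hu⟩ := Fintype.exists_ne_of_one_lt_card (by omega) v
  obtain ⟨p⟩ := hG.preconnected v u
  have hadj : ∃ w, G.Adj v w := by
    cases p with
    | nil => exact absurd rfl hu.symm
    | cons h q => exact ⟨_, h⟩
  obtain ⟨w, hvw⟩ := hadj
  have hdvw : G.dist v w ≤ k := by
    have := SimpleGraph.dist_le (SimpleGraph.Walk.cons hvw SimpleGraph.Walk.nil)
    simpa using this.trans hk
  set S0 : Finset V := Finset.univ.erase v with hS0
  have hS0dom : IsKDomSet G k S0 := by
    intro x hx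
    have hxv : x = v := by
      by_contra hxv
      exact hx (Finset.mem_erase.mpr ⟨hxv, Finset.mem_univ x⟩)
    exact ⟨w, Finset.mem_erase.mpr ⟨hvw.ne', Finset.mem_univ w⟩, hxv ▸ hdvw⟩
  have key : ∀ x y : V, x ≠ y → min (G.dist x x) (k+1) ≠ min (G.dist y x) (k+1) := by
    intro x y hxy
    have h1 : 1 ≤ G.dist y x := hG.pos_dist_of_ne (Ne.symm hxy)
    simp only [SimpleGraph.dist_self]
    omega
  have hS0res : IsKResSet G k S0 := by
    intro x y hxy
    by_cases hxv : x = v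
    · refine ⟨y, Finset.mem_erase.mpr ⟨fun h => hxy (hxv.trans h.symm), Finset.mem_univ y⟩, ?_⟩
      exact fun h => key y x (Ne.symm hxy) h.symm
    · exact ⟨x, Finset.mem_erase.mpr ⟨hxv, Finset.mem_univ x⟩, key x y hxy⟩
  have hldne : {m : ℕ | ∃ S : Finset V, IsKDomSet G k S ∧ IsKResSet G k S ∧ S.card = m}.Nonempty :=
    ⟨S0.card, S0, hS0dom, hS0res, rfl⟩
  obtain ⟨S, hSd, hSr, hScard⟩ := Nat.sInf_mem hldne
  have hdimne : {m : ℕ | ∃ R : Finset V, IsKResSet G k R ∧ R.card = m}.Nonempty :=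
    ⟨S0.card, S0, hS0res, rfl⟩
  obtain ⟨R, hR, hRcard⟩ := Nat.sInf_mem hdimne
  have hdom_le : kdom G k ≤ kld G k := Nat.sInf_le ⟨S, hSd, hScard⟩
  have hdim_le : kdim G k ≤ kld G k := Nat.sInf_le ⟨S, hSr, hScard⟩
  have hld_card : kld G k ≤ Fintype.card V - 1 := by
    have : kld G k ≤ S0.card := Nat.sInf_le ⟨S0, hS0dom, hS0res, rfl⟩
    rwa [hS0, Finset.card_erase_of_mem (Finset.mem_univ v), Finset.card_univ] at this
  have hld_dim : kld G k ≤ kdim G k + 1 := by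
    by_cases hcase : ∃ x, x ∉ R ∧ ∀ z ∈ R, ¬ G.dist x z ≤ k
    · obtain ⟨x, hxR, hx⟩ := hcase
      have hres : IsKResSet G k (insert x R) := by
        intro a b hab
        obtain ⟨z, hz, hzne⟩ := hR a b hab
        exact ⟨z, Finset.mem_insert_of_mem hz, hzne⟩
      have hdom : IsKDomSet G k (insert x R) := by
        intro a ha
        have hax : a ≠ x := fun h => ha (h ▸ Finset.mem_insert_self x R)
        by_contra hc
        push_neg at hc
        obtain ⟨z, hz, hzne⟩ := hR a x hax
        have h1 : k + 1 ≤ G.dist a z := hc z (Finset.mem_insert_of_mem hz)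
        have h2 : k + 1 ≤ G.dist x z := by have := hx z hz; omega
        exact hzne (by rw [min_eq_right h1, min_eq_right h2])
      have h : kld G k ≤ (insert x R).card := Nat.sInf_le ⟨insert x R, hdom, hres, rfl⟩
      calc kld G k ≤ (insert x R).card := h
        _ ≤ R.card + 1 := Finset.card_insert_le x R
        _ = kdim G k + 1 := by unfold kdim; rw [hRcard]
    · push_neg at hcase
      have hdom : IsKDomSet G k R := by
        intro a ha
        obtain ⟨z, hz, hzle⟩ := hcase a ha
        exact ⟨z, hz, hzle⟩
      have h : kld G k ≤ R.card := Nat.sInf_le ⟨R, hdom, hR, rfl⟩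
      unfold kdim
      omega
  exact ⟨max_le hdom_le hdim_le, le_min hld_dim hld_card⟩
end

section
/- For every finite simple connected graph G of order n ≥ 2, γ_L^1(G) = n − 1 if and only if G is isomorphic to the complete graph K_n or to the star K_{1,n−1}. -/
open SimpleGraph Finset

section Aux

variable {V : Type*}

lemma exists_adj_of_conn [Fintype V] (G : SimpleGraph V) (hG : G.Connected)
    (hn : 2 ≤ Fintype.card V) (v : V) : ∃ w, G.Adj v w := by
  obtain ⟨u, hu⟩ := Fintype.exists_ne_of_one_lt_card (by omega) v
  obtain ⟨p⟩ := hG.preconnected v u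
  cases p with
  | nil => exact absurd rfl hu.symm
  | cons h' _ => exact ⟨_, h'⟩

lemma two_le_dist' (G : SimpleGraph V) (hG : G.Connected) {u v : V} (hne : u ≠ v)
    (hadj : ¬ G.Adj u v) : 2 ≤ G.dist u v := by
  have h1 : 0 < G.dist u v := hG.pos_dist_of_ne hne
  have h2 : G.dist u v ≠ 1 := fun h => hadj (SimpleGraph.dist_eq_one_iff_adj.mp h)
  omega

lemma witness_sub_one [Fintype V] (G : SimpleGraph V) (hG : G.Connected)
    (hn : 2 ≤ Fintype.card V) :
    ∃ S : Finset V, IsKDomSet G 1 S ∧ IsKResSet G 1 S ∧ S.card = Fintype.card V - 1 := by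
  classical
  have hne : Nonempty V := Fintype.card_pos_iff.mp (by omega)
  obtain ⟨v⟩ := hne
  refine ⟨univ.erase v, ?_, ?_, ?_⟩
  · intro u hu
    have huv : u = v := by
      by_contra h
      exact hu (mem_erase.mpr ⟨h, mem_univ u⟩)
    obtain ⟨w, hw⟩ := exists_adj_of_conn G hG hn v
    refine ⟨w, mem_erase.mpr ⟨hw.ne', mem_univ w⟩, ?_⟩
    rw [huv, SimpleGraph.dist_eq_one_iff_adj.mpr hw]
  · intro x y hxy
    by_cases hx : x = v
    · refine ⟨y, mem_erase.mpr ⟨fun h => hxy (hx.trans h.symm), mem_univ y⟩, ?_⟩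
      have h1 : 0 < G.dist x y := hG.pos_dist_of_ne hxy
      have h2 : G.dist y y = 0 := SimpleGraph.dist_self
      omega
    · refine ⟨x, mem_erase.mpr ⟨hx, mem_univ x⟩, ?_⟩
      have h1 : 0 < G.dist y x := hG.pos_dist_of_ne (Ne.symm hxy)
      have h2 : G.dist x x = 0 := SimpleGraph.dist_self
      omega
  · rw [card_erase_of_mem (mem_univ v), card_univ]

lemma dist_two_pair (G : SimpleGraph V) {u v : V} (p : G.Walk u v) :
    u ≠ v → ¬ G.Adj u v →
    ∃ x y w, x ≠ y ∧ ¬ G.Adj x y ∧ G.Adj x w ∧ G.Adj y w := by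
  induction p with
  | nil => intro hne _; exact absurd rfl hne
  | @cons u b v h q ih =>
    intro hne hadj
    by_cases hbv : b = v
    · subst hbv; exact absurd h hadj
    · by_cases hadj2 : G.Adj b v
      · exact ⟨u, v, b, hne, hadj, h, hadj2.symm⟩
      · exact ih hbv hadj2

lemma good_pair (G : SimpleGraph V) (hG : G.Connected)
    (hnc : ∃ u v, u ≠ v ∧ ¬ G.Adj u v)
    (hns : ¬ ∃ c, ∀ x y, G.Adj x y ↔ ((x = c ∧ y ≠ c) ∨ (y = c ∧ x ≠ c))) :
    ∃ a b z wa wb : V, a ≠ b ∧ z ≠ a ∧ z ≠ b ∧ G.Adj b z ∧ ¬ G.Adj a z ∧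
      wa ≠ a ∧ wa ≠ b ∧ G.Adj a wa ∧ wb ≠ a ∧ wb ≠ b ∧ G.Adj b wb := by
  obtain ⟨u, v, hne, hadj⟩ := hnc
  obtain ⟨p⟩ := hG.preconnected u v
  obtain ⟨x, y, w, hxy, hxyadj, hxw, hyw⟩ := dist_two_pair G p hne hadj
  by_cases h1 : ∃ q, q ≠ w ∧ q ≠ x ∧ G.Adj x q
  · obtain ⟨q, hqw, hqx, hxq⟩ := h1
    exact ⟨x, w, y, q, y, hxw.ne, hxy.symm, hyw.ne, hyw.symm, hxyadj,
      hqx, hqw, hxq, hxy.symm, hyw.ne, hyw.symm⟩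
  · by_cases h2 : ∃ q, q ≠ w ∧ q ≠ y ∧ G.Adj y q
    · obtain ⟨q, hqw, hqy, hyq⟩ := h2
      exact ⟨y, w, x, q, x, hyw.ne, hxy, hxw.ne, hxw.symm, fun h => hxyadj h.symm,
        hqy, hqw, hyq, hxy, hxw.ne, hxw.symm⟩
    · push_neg at h1 h2
      have hx_only : ∀ q, G.Adj x q → q = w := by
        intro q hq
        by_contra hqw
        exact h1 q hqw (fun h => G.irrefl (h ▸ hq)) hq
      have hy_only : ∀ q, G.Adj y q → q = w := by
        intro q hq
        by_contra hqw
        exact h2 q hqw (fun h => G.irrefl (h ▸ hq)) hq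
      by_cases h3 : ∃ s t, s ≠ w ∧ t ≠ w ∧ G.Adj s t
      · obtain ⟨s, t, hsw, htw, hst⟩ := h3
        have hsx : s ≠ x := fun h => htw (hx_only t (h ▸ hst))
        have htx : t ≠ x := fun h => hsw (hx_only s (h ▸ hst).symm)
        exact ⟨x, s, t, w, t, hsx.symm, htx, hst.ne', hst, fun h => htw (hx_only t h),
          hxw.ne', hsw.symm, hxw, htx, hst.ne', hst⟩
      · push_neg at h3
        exfalso
        apply hns
        refine ⟨w, fun s t => ⟨fun h => ?_, fun h => ?_⟩⟩
        · by_cases hsw : s = w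
          · exact Or.inl ⟨hsw, fun htw => G.irrefl ((hsw.trans htw.symm) ▸ h)⟩
          · have htw : t = w := by
              by_contra htw
              exact h3 s t hsw htw h
            exact Or.inr ⟨htw, hsw⟩
        · rcases h with ⟨hsw, htw⟩ | ⟨htw, hsw⟩
          · rw [hsw]
            obtain ⟨pw⟩ := hG.preconnected t w
            cases pw with
            | nil => exact absurd rfl htw
            | cons h' q' =>
              rename_i b
              have hbw : b = w := by
                by_contra hbw
                exact h3 t b htw hbw h'
              exact (hbw ▸ h').symm
          · rw [htw]
            obtain ⟨pw⟩ := hG.preconnected s w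
            cases pw with
            | nil => exact absurd rfl hsw
            | cons h' q' =>
              rename_i b
              have hbw : b = w := by
                by_contra hbw
                exact h3 s b hsw hbw h'
              exact hbw ▸ h'

lemma witness_sub_two [Fintype V] (G : SimpleGraph V) (hG : G.Connected)
    {a b z wa wb : V} (hab : a ≠ b) (hza : z ≠ a) (hzb : z ≠ b)
    (hbz : G.Adj b z) (haz : ¬ G.Adj a z)
    (hwa1 : wa ≠ a) (hwa2 : wa ≠ b) (hwa : G.Adj a wa)
    (hwb1 : wb ≠ a) (hwb2 : wb ≠ b) (hwb : G.Adj b wb) :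
    ∃ S : Finset V, IsKDomSet G 1 S ∧ IsKResSet G 1 S ∧ S.card = Fintype.card V - 2 := by
  classical
  refine ⟨univ \ {a, b}, ?_, ?_, ?_⟩
  · intro u hu
    have hu' : u = a ∨ u = b := by
      simp only [mem_sdiff, mem_univ, true_and, mem_insert, mem_singleton, not_not] at hu
      exact hu
    rcases hu' with rfl | rfl
    · exact ⟨wa, by simp [hwa1, hwa2], by rw [SimpleGraph.dist_eq_one_iff_adj.mpr hwa]⟩
    · exact ⟨wb, by simp [hwb1, hwb2], by rw [SimpleGraph.dist_eq_one_iff_adj.mpr hwb]⟩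
  · intro x y hxy
    by_cases hx : x ∈ (univ \ ({a, b} : Finset V))
    · refine ⟨x, hx, ?_⟩
      have h1 : 0 < G.dist y x := hG.pos_dist_of_ne (Ne.symm hxy)
      have h2 : G.dist x x = 0 := SimpleGraph.dist_self
      omega
    · by_cases hy : y ∈ (univ \ ({a, b} : Finset V))
      · refine ⟨y, hy, ?_⟩
        have h1 : 0 < G.dist x y := hG.pos_dist_of_ne hxy
        have h2 : G.dist y y = 0 := SimpleGraph.dist_self
        omega
      · have hx' : x = a ∨ x = b := by
          simp only [mem_sdiff, mem_univ, true_and, mem_insert, mem_singleton, not_not] at hx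
          exact hx
        have hy' : y = a ∨ y = b := by
          simp only [mem_sdiff, mem_univ, true_and, mem_insert, mem_singleton, not_not] at hy
          exact hy
        have hzmem : z ∈ univ \ ({a, b} : Finset V) := by simp [hza, hzb]
        have hd1 : G.dist b z = 1 := SimpleGraph.dist_eq_one_iff_adj.mpr hbz
        have hd2 : 2 ≤ G.dist a z := two_le_dist' G hG hza.symm haz
        rcases hx' with rfl | rfl <;> rcases hy' with rfl | rfl
        · exact absurd rfl hxy
        · exact ⟨z, hzmem, by omega⟩
        · exact ⟨z, hzmem, by omega⟩
        · exact absurd rfl hxy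
  · rw [card_sdiff_of_subset (subset_univ _), card_univ]
    congr 1
    rw [card_insert_of_notMem (by simp [hab]), card_singleton]

lemma lower_complete [Fintype V] (G : SimpleGraph V)
    (hc : ∀ x y : V, x ≠ y → G.Adj x y)
    (S : Finset V) (hres : IsKResSet G 1 S) : Fintype.card V - 1 ≤ S.card := by
  classical
  have hcompl : Sᶜ.card ≤ 1 := by
    by_contra hlt
    push_neg at hlt
    obtain ⟨x, hx, y, hy, hxy⟩ := Finset.one_lt_card.mp hlt
    obtain ⟨z, hz, hzd⟩ := hres x y hxy
    have hzx : z ≠ x := fun h => (Finset.mem_compl.mp hx) (h ▸ hz)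
    have hzy : z ≠ y := fun h => (Finset.mem_compl.mp hy) (h ▸ hz)
    have d1 : G.dist x z = 1 := SimpleGraph.dist_eq_one_iff_adj.mpr (hc x z hzx.symm)
    have d2 : G.dist y z = 1 := SimpleGraph.dist_eq_one_iff_adj.mpr (hc y z hzy.symm)
    rw [d1, d2] at hzd
    exact hzd rfl
  have := Finset.card_add_card_compl S
  omega

lemma lower_star [Fintype V] (G : SimpleGraph V) (hG : G.Connected) (c : V)
    (hs : ∀ x y : V, G.Adj x y ↔ ((x = c ∧ y ≠ c) ∨ (y = c ∧ x ≠ c)))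
    (S : Finset V) (hdom : IsKDomSet G 1 S) (hres : IsKResSet G 1 S) :
    Fintype.card V - 1 ≤ S.card := by
  classical
  have hadj_c : ∀ x : V, x ≠ c → G.Adj x c := fun x hx => (hs x c).mpr (Or.inr ⟨rfl, hx⟩)
  have hdist2 : ∀ x y : V, x ≠ y → x ≠ c → y ≠ c → G.dist x y = 2 := by
    intro x y hxy hxc hyc
    have hnadj : ¬ G.Adj x y := by
      rw [hs]
      rintro (⟨rfl, _⟩ | ⟨rfl, _⟩) <;> simp_all
    have hle : G.dist x y ≤ 2 := by
      simpa using SimpleGraph.dist_le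
        (Walk.cons (hadj_c x hxc) (Walk.cons ((hadj_c y hyc).symm) Walk.nil))
    have := two_le_dist' G hG hxy hnadj
    omega
  have hcompl : Sᶜ.card ≤ 1 := by
    by_contra hlt
    push_neg at hlt
    obtain ⟨x, hx, y, hy, hxy⟩ := Finset.one_lt_card.mp hlt
    rw [Finset.mem_compl] at hx hy
    by_cases hxc : x = c
    · obtain ⟨w, hw, hwd⟩ := hdom y hy
      have hwy : w ≠ y := fun h => hy (h ▸ hw)
      have hpos : 0 < G.dist y w := hG.pos_dist_of_ne (Ne.symm hwy)
      have hd1 : G.dist y w = 1 := by omega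
      have hadj : G.Adj y w := SimpleGraph.dist_eq_one_iff_adj.mp hd1
      rcases (hs y w).mp hadj with ⟨hyc, _⟩ | ⟨hwc, _⟩
      · exact hxy (hxc.trans hyc.symm)
      · exact hx ((hwc.trans hxc.symm) ▸ hw)
    · by_cases hyc : y = c
      · obtain ⟨w, hw, hwd⟩ := hdom x hx
        have hwx : w ≠ x := fun h => hx (h ▸ hw)
        have hpos : 0 < G.dist x w := hG.pos_dist_of_ne (Ne.symm hwx)
        have hd1 : G.dist x w = 1 := by omega
        have hadj : G.Adj x w := SimpleGraph.dist_eq_one_iff_adj.mp hd1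
        rcases (hs x w).mp hadj with ⟨hxc2, _⟩ | ⟨hwc, _⟩
        · exact hxc hxc2
        · exact hy ((hwc.trans hyc.symm) ▸ hw)
      · obtain ⟨z, hz, hzd⟩ := hres x y hxy
        have hzx : z ≠ x := fun h => hx (h ▸ hz)
        have hzy : z ≠ y := fun h => hy (h ▸ hz)
        by_cases hzc : z = c
        · have d1 : G.dist x z = 1 :=
            SimpleGraph.dist_eq_one_iff_adj.mpr (hzc ▸ hadj_c x hxc)
          have d2 : G.dist y z = 1 :=
            SimpleGraph.dist_eq_one_iff_adj.mpr (hzc ▸ hadj_c y hyc)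
          rw [d1, d2] at hzd
          exact hzd rfl
        · have d1 : G.dist x z = 2 := hdist2 x z hzx.symm hxc hzc
          have d2 : G.dist y z = 2 := hdist2 y z hzy.symm hyc hzc
          rw [d1, d2] at hzd
          exact hzd rfl
  have := Finset.card_add_card_compl S
  omega

lemma complete_iso_of_all_adj [Fintype V] (G : SimpleGraph V)
    (hc : ∀ x y : V, x ≠ y → G.Adj x y) :
    Nonempty (G ≃g (⊤ : SimpleGraph (Fin (Fintype.card V)))) := by
  have hG : G = ⊤ := by
    ext x y
    exact ⟨fun h => h.ne, fun h => hc x y h⟩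
  rw [hG]
  exact ⟨Iso.completeGraph (Fintype.equivFin V)⟩

lemma all_adj_of_complete_iso [Fintype V] (G : SimpleGraph V)
    (e : G ≃g (⊤ : SimpleGraph (Fin (Fintype.card V)))) :
    ∀ x y : V, x ≠ y → G.Adj x y := by
  intro x y hxy
  have : (⊤ : SimpleGraph (Fin (Fintype.card V))).Adj (e x) (e y) :=
    top_adj _ _ |>.mpr (fun h => hxy (e.toEquiv.injective h))
  exact e.map_adj_iff.mp this

lemma star_iso_of_structure [Fintype V] (G : SimpleGraph V) (c : V)
    (hs : ∀ x y : V, G.Adj x y ↔ ((x = c ∧ y ≠ c) ∨ (y = c ∧ x ≠ c))) :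
    Nonempty (G ≃g completeBipartiteGraph (Fin 1) (Fin (Fintype.card V - 1))) := by
  classical
  have hcard1 : Fintype.card {x : V // x = c} = 1 := Fintype.card_subtype_eq c
  have hcard2 : Fintype.card {x : V // ¬ x = c} = Fintype.card V - 1 := by
    rw [Fintype.card_subtype_compl, Fintype.card_subtype_eq]
  let e1 : {x : V // x = c} ≃ Fin 1 := Fintype.equivFinOfCardEq hcard1
  let e2 : {x : V // ¬ x = c} ≃ Fin (Fintype.card V - 1) := Fintype.equivFinOfCardEq hcard2
  let e : V ≃ (Fin 1 ⊕ Fin (Fintype.card V - 1)) :=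
    (Equiv.sumCompl (· = c)).symm.trans (Equiv.sumCongr e1 e2)
  have hleft : ∀ (x : V) (h : x = c), e x = Sum.inl (e1 ⟨x, h⟩) := by
    intro x h
    simp only [e, Equiv.trans_apply, Equiv.sumCongr_apply]
    rw [Equiv.sumCompl_symm_apply_of_pos (p := fun y => y = c) (a := x) h]
    rfl
  have hright : ∀ (x : V) (h : ¬ x = c), e x = Sum.inr (e2 ⟨x, h⟩) := by
    intro x h
    simp only [e, Equiv.trans_apply, Equiv.sumCongr_apply]
    rw [Equiv.sumCompl_symm_apply_of_neg (p := fun y => y = c) (a := x) h]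
    rfl
  refine ⟨⟨e, ?_⟩⟩
  intro a b
  show (completeBipartiteGraph _ _).Adj (e a) (e b) ↔ G.Adj a b
  by_cases ha : a = c <;> by_cases hb : b = c
  · rw [hleft a ha, hleft b hb]
    simp [hs, ha, hb]
  · rw [hleft a ha, hright b hb]
    simp [hs, ha, hb]
  · rw [hright a ha, hleft b hb]
    simp [hs, ha, hb]
  · rw [hright a ha, hright b hb]
    simp [hs, ha, hb]

lemma structure_of_star_iso [Fintype V] (G : SimpleGraph V)
    (e : G ≃g completeBipartiteGraph (Fin 1) (Fin (Fintype.card V - 1))) :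
    ∃ c : V, ∀ x y : V, G.Adj x y ↔ ((x = c ∧ y ≠ c) ∨ (y = c ∧ x ≠ c)) := by
  refine ⟨e.symm (Sum.inl 0), fun x y => ?_⟩
  set c := e.symm (Sum.inl 0) with hcdef
  have hc : ∀ v : V, v = c ↔ e v = Sum.inl 0 := by
    intro v
    constructor
    · rintro rfl
      exact e.apply_symm_apply _
    · intro h
      have h2 := congrArg e.symm h
      rwa [e.symm_apply_apply] at h2
  rw [← e.map_adj_iff]
  have hx := hc x
  have hy := hc y
  rcases hex : e x with i | i <;> rcases hey : e y with j | j <;>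
    rw [hex] at hx <;> rw [hey] at hy
  · have hi : i = 0 := Subsingleton.elim _ _
    have hj : j = 0 := Subsingleton.elim _ _
    simp [hi, hj] at hx hy
    simp [hx, hy]
  · have hi : i = 0 := Subsingleton.elim _ _
    simp [hi] at hx
    simp at hy
    simp [hx, hy]
  · have hj : j = 0 := Subsingleton.elim _ _
    simp [hj] at hy
    simp at hx
    simp [hx, hy]
  · simp at hx hy
    simp [hx, hy]

end Aux

/-- For every finite simple connected graph `G` of order `n ≥ 2`, `γ_L^1(G) = n - 1`
iff `G` is isomorphic to the complete graph `K_n` or to the star `K_{1,n-1}`. -/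
theorem stmt_6 {V : Type*} [Fintype V] (G : SimpleGraph V) (hG : G.Connected)
    (hn : 2 ≤ Fintype.card V) :
    kld G 1 = Fintype.card V - 1 ↔
      (Nonempty (G ≃g (⊤ : SimpleGraph (Fin (Fintype.card V)))) ∨
       Nonempty (G ≃g completeBipartiteGraph (Fin 1) (Fin (Fintype.card V - 1)))) := by
  classical
  obtain ⟨S₀, hd₀, hr₀, hc₀⟩ := witness_sub_one G hG hn
  have hup : kld G 1 ≤ Fintype.card V - 1 := Nat.sInf_le ⟨S₀, hd₀, hr₀, hc₀⟩
  constructor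
  · intro h
    by_contra hcon
    push_neg at hcon
    obtain ⟨hnc, hns⟩ := hcon
    have hpair : ∃ u v : V, u ≠ v ∧ ¬ G.Adj u v := by
      by_contra hall
      push_neg at hall
      exact not_nonempty_iff.mpr hnc (complete_iso_of_all_adj G hall)
    have hns' : ¬ ∃ c : V, ∀ x y : V, G.Adj x y ↔ ((x = c ∧ y ≠ c) ∨ (y = c ∧ x ≠ c)) := by
      rintro ⟨c, hs⟩
      exact not_nonempty_iff.mpr hns (star_iso_of_structure G c hs)
    obtain ⟨a, b, z, wa, wb, hab, hza, hzb, hbz, haz, hwa1, hwa2, hwa, hwb1, hwb2, hwb⟩ :=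
      good_pair G hG hpair hns'
    obtain ⟨S, hd, hr, hc⟩ :=
      witness_sub_two G hG hab hza hzb hbz haz hwa1 hwa2 hwa hwb1 hwb2 hwb
    have hle : kld G 1 ≤ Fintype.card V - 2 := Nat.sInf_le ⟨S, hd, hr, hc⟩
    omega
  · intro h
    have hlow : Fintype.card V - 1 ≤ kld G 1 := by
      have hmem : kld G 1 ∈
          {m : ℕ | ∃ S : Finset V, IsKDomSet G 1 S ∧ IsKResSet G 1 S ∧ S.card = m} :=
        Nat.sInf_mem ⟨Fintype.card V - 1, S₀, hd₀, hr₀, hc₀⟩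
      obtain ⟨S, hd, hr, hc⟩ := hmem
      rcases h with he | he
      · obtain ⟨e⟩ := he
        have := lower_complete G (all_adj_of_complete_iso G e) S hr
        omega
      · obtain ⟨e⟩ := he
        obtain ⟨c, hs⟩ := structure_of_star_iso G e
        have := lower_star G hG c hs S hd hr
        omega
    omega
end

section
/- For every finite simple connected graph G of order n ≥ 2 and every integer k ≥ 2, γ_L^k(G) = n − 1 if and only if G is isomorphic to the complete graph K_n. -/
open SimpleGraph Finset

/-- A connected non-complete graph contains an induced path on three vertices. -/
lemma exists_P3' {V : Type*} {G : SimpleGraph V} (hG : G.Connected)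
    (hne : ∃ a b : V, a ≠ b ∧ ¬ G.Adj a b) :
    ∃ u w v : V, G.Adj u w ∧ G.Adj w v ∧ ¬ G.Adj u v ∧ u ≠ v := by
  classical
  set T : Set ℕ := {d | ∃ a b : V, a ≠ b ∧ ¬ G.Adj a b ∧ G.dist a b = d} with hT
  have hTne : T.Nonempty := by
    obtain ⟨a, b, hab, hnadj⟩ := hne
    exact ⟨G.dist a b, a, b, hab, hnadj, rfl⟩
  obtain ⟨u, v, huv, hnadj, hd⟩ : ∃ a b : V, a ≠ b ∧ ¬ G.Adj a b ∧ G.dist a b = sInf T :=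
    Nat.sInf_mem hTne
  have hd0 : 0 < G.dist u v := hG.pos_dist_of_ne huv
  have hd1 : G.dist u v ≠ 1 := fun h => hnadj (SimpleGraph.dist_eq_one_iff_adj.mp h)
  obtain ⟨p, hp⟩ := hG.exists_walk_length_eq_dist u v
  cases p with
  | nil => simp at hd0
  | cons h q =>
    rename_i c
    simp only [SimpleGraph.Walk.length_cons] at hp
    have hcv : G.dist c v ≤ G.dist u v - 1 := by
      have := SimpleGraph.dist_le q
      omega
    by_cases hadj : G.Adj c v
    · exact ⟨u, c, v, h, hadj, hnadj, huv⟩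
    · exfalso
      have hcvne : c ≠ v := by rintro rfl; exact hnadj h
      have : G.dist c v ∈ T := ⟨c, v, hcvne, hadj, rfl⟩
      have := Nat.sInf_le this
      omega

/-- For every finite simple connected graph `G` of order `n ≥ 2` and integer `k ≥ 2`,
`γ_L^k(G) = n - 1` iff `G` is isomorphic to the complete graph `K_n`. -/
theorem stmt_7 {V : Type*} [Fintype V] (G : SimpleGraph V) (hG : G.Connected)
    (hn : 2 ≤ Fintype.card V) (k : ℕ) (hk : 2 ≤ k) :
    kld G k = Fintype.card V - 1 ↔
      Nonempty (G ≃g (⊤ : SimpleGraph (Fin (Fintype.card V)))) := by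
  classical
  set n := Fintype.card V with hncard
  constructor
  · intro h
    -- show G = ⊤
    have htop : G = ⊤ := by
      by_contra hne
      have hex : ∃ a b : V, a ≠ b ∧ ¬ G.Adj a b := by
        by_contra hc
        push_neg at hc
        apply hne
        ext a b
        simp only [top_adj]
        exact ⟨fun hab => G.ne_of_adj hab, fun hab => hc a b hab⟩
      obtain ⟨u, w, v, huw, hwv, hnuv, huvne⟩ := exists_P3' hG hex
      have huwne : u ≠ w := G.ne_of_adj huw
      have hwvne : w ≠ v := G.ne_of_adj hwv
      -- n ≥ 3
      have h3 : 3 ≤ n := by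
        have hsub : ({u, w, v} : Finset V) ⊆ univ := subset_univ _
        have hcard : ({u, w, v} : Finset V).card = 3 := by
          rw [card_insert_of_notMem (by simp [huwne, huvne]),
            card_insert_of_notMem (by simp [hwvne]), card_singleton]
        calc 3 = ({u, w, v} : Finset V).card := hcard.symm
          _ ≤ univ.card := card_le_card hsub
          _ = n := card_univ
      set S : Finset V := univ \ {u, w} with hS
      have hScard : S.card = n - 2 := by
        rw [hS, card_sdiff_of_subset (subset_univ _), card_univ]
        congr 1
        rw [card_insert_of_notMem (by simp [huwne]), card_singleton]
      have hvS : v ∈ S := by simp [hS, huvne.symm, hwvne.symm]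
      have hdwv : G.dist w v = 1 := SimpleGraph.dist_eq_one_iff_adj.mpr hwv
      have hduv : G.dist u v = 2 := by
        have hle : G.dist u v ≤ 2 := by
          have := SimpleGraph.dist_le (SimpleGraph.Walk.cons huw hwv.toWalk)
          simpa using this
        have h0 : 0 < G.dist u v := hG.pos_dist_of_ne huvne
        have h1 : G.dist u v ≠ 1 := fun h => hnuv (SimpleGraph.dist_eq_one_iff_adj.mp h)
        omega
      have hdom : IsKDomSet G k S := by
        intro a ha
        refine ⟨v, hvS, ?_⟩
        have : a = u ∨ a = w := by
          by_contra hc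
          push_neg at hc
          exact ha (by simp [hS, hc.1, hc.2])
        rcases this with rfl | rfl
        · omega
        · omega
      have hres : IsKResSet G k S := by
        intro x y hxy
        by_cases hx : x ∈ S
        · refine ⟨x, hx, ?_⟩
          have := hG.pos_dist_of_ne hxy.symm
          simp only [SimpleGraph.dist_self]
          omega
        · by_cases hy : y ∈ S
          · refine ⟨y, hy, ?_⟩
            have := hG.pos_dist_of_ne hxy
            simp only [SimpleGraph.dist_self]
            omega
          · have hx' : x = u ∨ x = w := by
              by_contra hc; push_neg at hc; exact hx (by simp [hS, hc.1, hc.2])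
            have hy' : y = u ∨ y = w := by
              by_contra hc; push_neg at hc; exact hy (by simp [hS, hc.1, hc.2])
            refine ⟨v, hvS, ?_⟩
            rcases hx' with rfl | rfl <;> rcases hy' with rfl | rfl <;>
              first
              | exact absurd rfl hxy
              | (rw [hduv, hdwv]; omega)
      have hle : kld G k ≤ n - 2 := by
        have : n - 2 ∈ {m : ℕ | ∃ S : Finset V, IsKDomSet G k S ∧ IsKResSet G k S ∧ S.card = m} :=
          ⟨S, hdom, hres, hScard⟩
        exact Nat.sInf_le this
      omega
    refine ⟨?_⟩
    rw [htop, ← completeGraph_eq_top, ← completeGraph_eq_top]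
    exact SimpleGraph.Iso.completeGraph (Fintype.equivFin V)
  · rintro ⟨f⟩
    have htop : ∀ a b : V, a ≠ b → G.Adj a b := by
      intro a b hab
      have : (⊤ : SimpleGraph (Fin n)).Adj (f a) (f b) := by
        simp only [top_adj]
        exact fun hc => hab (f.injective hc)
      exact f.map_adj_iff.mp this
    have hdist : ∀ a b : V, a ≠ b → G.dist a b = 1 :=
      fun a b hab => SimpleGraph.dist_eq_one_iff_adj.mpr (htop a b hab)
    have hnt : Nontrivial V := Fintype.one_lt_card_iff_nontrivial.mp hn
    obtain ⟨v₀⟩ : Nonempty V := Fintype.card_pos_iff.mp (by omega)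
    obtain ⟨w₀, hw₀⟩ := exists_ne v₀
    set S : Finset V := univ.erase v₀ with hS
    have hScard : S.card = n - 1 := by
      rw [hS, card_erase_of_mem (mem_univ _), card_univ]
    have hdom : IsKDomSet G k S := by
      intro a ha
      have : a = v₀ := by
        by_contra hc
        exact ha (by simp [hS, hc])
      subst this
      exact ⟨w₀, by simp [hS, hw₀], by rw [hdist _ _ (Ne.symm hw₀)]; omega⟩
    have hres : IsKResSet G k S := by
      intro x y hxy
      by_cases hx : x ∈ S
      · refine ⟨x, hx, ?_⟩
        rw [SimpleGraph.dist_self, hdist y x hxy.symm]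
        omega
      · have hx' : x = v₀ := by by_contra hc; exact hx (by simp [hS, hc])
        have hy : y ∈ S := by simp [hS, hx' ▸ hxy.symm]
        refine ⟨y, hy, ?_⟩
        rw [SimpleGraph.dist_self, hdist x y hxy]
        omega
    have hmem : n - 1 ∈ {m : ℕ | ∃ S : Finset V, IsKDomSet G k S ∧ IsKResSet G k S ∧ S.card = m} :=
      ⟨S, hdom, hres, hScard⟩
    have hub : kld G k ≤ n - 1 := Nat.sInf_le hmem
    have hlb : n - 1 ≤ kld G k := by
      apply le_csInf ⟨n - 1, hmem⟩
      rintro m ⟨T, hTd, hTr, rfl⟩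
      by_contra hc
      push_neg at hc
      have hTc : 1 < (univ \ T).card := by
        rw [card_sdiff_of_subset (subset_univ _), card_univ]
        omega
      obtain ⟨x, hx, y, hy, hxy⟩ := Finset.one_lt_card.mp hTc
      simp only [mem_sdiff, mem_univ, true_and] at hx hy
      obtain ⟨z, hz, hne⟩ := hTr x y hxy
      have hxz : x ≠ z := fun h => hx (h ▸ hz)
      have hyz : y ≠ z := fun h => hy (h ▸ hz)
      rw [hdist x z hxz, hdist y z hyz] at hne
      exact hne rfl
    omega
end

section
/- For every positive integer k and every positive integer N, there exists a finite simple connected graph G of order n ≥ 2 such that (n − 1) − γ_L^k(G) ≥ N. -/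
open SimpleGraph Finset

open SimpleGraph Finset

section helpers

variable {V W : Type*} {G : SimpleGraph V} {G' : SimpleGraph W}

lemma iso_reachable (φ : G ≃g G') {u v : W} (h : G'.Reachable u v) :
    G.Reachable (φ.symm u) (φ.symm v) := by
  obtain ⟨p⟩ := h
  exact ⟨p.map φ.symm.toHom⟩

lemma iso_dist (φ : G ≃g G') (hc : G'.Connected) (u v : V) :
    G.dist u v = G'.dist (φ u) (φ v) := by
  apply le_antisymm
  · obtain ⟨p, hp⟩ := (hc (φ u) (φ v)).exists_walk_length_eq_dist
    calc G.dist u v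
        ≤ ((p.map φ.symm.toHom).copy (φ.symm_apply_apply u) (φ.symm_apply_apply v)).length :=
          SimpleGraph.dist_le _
      _ = p.length := by simp
      _ = _ := hp
  · have hr : G.Reachable u v := by
      have := iso_reachable φ (hc (φ u) (φ v))
      simpa using this
    obtain ⟨p, hp⟩ := hr.exists_walk_length_eq_dist
    calc G'.dist (φ u) (φ v) ≤ (p.map φ.toHom).length := SimpleGraph.dist_le _
      _ = p.length := by simp
      _ = _ := hp

end helpers

/-- For every positive integer `k` and every positive integer `N`, there is a finite
simple connected graph `G` of order `n ≥ 2` with `(n - 1) - γ_L^k(G) ≥ N`. -/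
theorem stmt_10 (k : ℕ) (hk : 1 ≤ k) (N : ℕ) (hN : 1 ≤ N) :
    ∃ (n : ℕ) (G : SimpleGraph (Fin n)), 2 ≤ n ∧ G.Connected ∧
      kld G k + N ≤ n - 1 := by
  set m := N + 2 with hm
  -- the vertex type: nonempty subsets of Fin m
  let V := {A : Finset (Fin m) // A.Nonempty}
  let G' : SimpleGraph V :=
    { Adj := fun A B => A ≠ B ∧ (A.val ∩ B.val).Nonempty
      symm := by
        constructor
        rintro A B ⟨h1, h2⟩
        exact ⟨h1.symm, by rwa [Finset.inter_comm]⟩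
      loopless := by constructor; rintro A ⟨h1, _⟩; exact h1 rfl }
  have hadj : ∀ A B : V, G'.Adj A B ↔ A ≠ B ∧ (A.val ∩ B.val).Nonempty := fun _ _ => Iff.rfl
  haveI : Nonempty V := ⟨⟨{0}, Finset.singleton_nonempty _⟩⟩
  -- connectedness of G'
  have hreach : ∀ A B : V, G'.Reachable A B := by
    intro A B
    by_cases hAB : A = B
    · subst hAB; rfl
    by_cases hint : (A.val ∩ B.val).Nonempty
    · exact (SimpleGraph.Adj.reachable ⟨hAB, hint⟩)
    · obtain ⟨a, ha⟩ := A.2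
      obtain ⟨b, hb⟩ := B.2
      have hbA : b ∉ A.val := by
        intro h
        exact hint ⟨b, Finset.mem_inter.mpr ⟨h, hb⟩⟩
      have haB : a ∉ B.val := by
        intro h
        exact hint ⟨a, Finset.mem_inter.mpr ⟨ha, h⟩⟩
      set C : V := ⟨A.val ∪ B.val, ⟨a, Finset.mem_union_left _ ha⟩⟩ with hC
      have h1 : G'.Adj A C := by
        refine ⟨?_, ⟨a, Finset.mem_inter.mpr ⟨ha, Finset.mem_union_left _ ha⟩⟩⟩
        intro h
        apply hbA
        have : A.val = A.val ∪ B.val := congrArg Subtype.val h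
        rw [this]; exact Finset.mem_union_right _ hb
      have h2 : G'.Adj C B := by
        refine ⟨?_, ⟨b, Finset.mem_inter.mpr ⟨Finset.mem_union_right _ hb, hb⟩⟩⟩
        intro h
        apply haB
        have : A.val ∪ B.val = B.val := congrArg Subtype.val h
        rw [← this]; exact Finset.mem_union_left _ ha
      exact (h1.reachable).trans h2.reachable
  have hconn : G'.Connected := by
    rw [SimpleGraph.connected_iff]
    exact ⟨hreach, inferInstance⟩
  -- distance lemmas in G'
  have hle1 : ∀ (A : V) (z : Fin m) (hz : z ∈ A.val),
      G'.dist A ⟨{z}, Finset.singleton_nonempty z⟩ ≤ 1 := by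
    intro A z hz
    by_cases h : A = ⟨{z}, Finset.singleton_nonempty z⟩
    · rw [h, SimpleGraph.dist_self]; omega
    · have : G'.Adj A ⟨{z}, Finset.singleton_nonempty z⟩ :=
        ⟨h, ⟨z, Finset.mem_inter.mpr ⟨hz, Finset.mem_singleton_self z⟩⟩⟩
      exact le_of_eq (SimpleGraph.dist_eq_one_iff_adj.mpr this)
  have hge2 : ∀ (B : V) (a : Fin m) (ha : a ∉ B.val),
      2 ≤ G'.dist B ⟨{a}, Finset.singleton_nonempty a⟩ := by
    intro B a ha
    have hne : B ≠ ⟨{a}, Finset.singleton_nonempty a⟩ := by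
      intro h; apply ha; rw [h]; exact Finset.mem_singleton_self a
    have h0 : G'.dist B ⟨{a}, Finset.singleton_nonempty a⟩ ≠ 0 := by
      intro h
      exact hne (hconn.dist_eq_zero_iff.mp h)
    have h1 : G'.dist B ⟨{a}, Finset.singleton_nonempty a⟩ ≠ 1 := by
      intro h
      obtain ⟨-, x, hx⟩ := SimpleGraph.dist_eq_one_iff_adj.mp h
      rw [Finset.mem_inter, Finset.mem_singleton] at hx
      exact ha (hx.2 ▸ hx.1)
    omega
  -- the locating-dominating set: singletons
  let S : Finset V := Finset.image (fun a : Fin m => (⟨{a}, Finset.singleton_nonempty a⟩ : V)) Finset.univ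
  have hScard : S.card = m := by
    rw [Finset.card_image_of_injective _ ?_, Finset.card_univ, Fintype.card_fin]
    intro a b hab
    have : ({a} : Finset (Fin m)) = {b} := congrArg Subtype.val hab
    simpa using this
  have hSdom : IsKDomSet G' k S := by
    intro u _
    obtain ⟨a, ha⟩ := u.2
    refine ⟨⟨{a}, Finset.singleton_nonempty a⟩, Finset.mem_image.mpr ⟨a, Finset.mem_univ a, rfl⟩, ?_⟩
    calc G'.dist u _ ≤ 1 := hle1 u a ha
      _ ≤ k := hk
  have hSres : IsKResSet G' k S := by
    intro x y hxy
    have hval : x.val ≠ y.val := fun h => hxy (Subtype.ext h)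
    have : ∃ a : Fin m, (a ∈ x.val ∧ a ∉ y.val) ∨ (a ∈ y.val ∧ a ∉ x.val) := by
      by_contra h
      push_neg at h
      apply hval
      ext a
      have := h a
      tauto
    obtain ⟨a, hcase⟩ := this
    refine ⟨⟨{a}, Finset.singleton_nonempty a⟩,
      Finset.mem_image.mpr ⟨a, Finset.mem_univ a, rfl⟩, ?_⟩
    rcases hcase with ⟨h1, h2⟩ | ⟨h1, h2⟩
    · have d1 := hle1 x a h1
      have d2 := hge2 y a h2
      omega
    · have d1 := hle1 y a h1
      have d2 := hge2 x a h2
      omega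
  -- transfer to Fin n
  set n := Fintype.card V with hn
  have hncard : n = 2 ^ m - 1 := by
    rw [hn, Fintype.card_subtype]
    have : (Finset.univ.filter (fun A : Finset (Fin m) => A.Nonempty)) =
        Finset.univ.erase ∅ := by
      ext A
      simp [Finset.nonempty_iff_ne_empty]
    rw [this, Finset.card_erase_of_mem (Finset.mem_univ _), Finset.card_univ]
    simp
  let e : Fin n ≃ V := (Fintype.equivFin V).symm
  let G : SimpleGraph (Fin n) := G'.comap e
  let φ : G ≃g G' := ⟨e, Iff.rfl⟩
  have hGconn : G.Connected := by
    rw [SimpleGraph.connected_iff]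
    constructor
    · intro u v
      have := iso_reachable φ (hreach (φ u) (φ v))
      simpa using this
    · have : 0 < n := Fintype.card_pos
      exact ⟨⟨0, this⟩⟩
  have hφe : ∀ x : Fin n, φ x = e x := fun _ => by rfl
  have hdist : ∀ u v : Fin n, G.dist u v = G'.dist (e u) (e v) := by
    intro u v
    rw [← hφe, ← hφe]
    exact iso_dist φ hconn u v
  -- the pulled-back set
  let S' : Finset (Fin n) := S.image e.symm
  have hS'card : S'.card = m := by
    rw [Finset.card_image_of_injective _ e.symm.injective, hScard]
  have hkld : kld G k ≤ m := by
    apply Nat.sInf_le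
    refine ⟨S', ?_, ?_, hS'card⟩
    · intro u hu
      obtain ⟨w, hwS, hw⟩ := hSdom (e u) (by
        intro h
        apply hu
        exact Finset.mem_image.mpr ⟨e u, h, e.symm_apply_apply u⟩)
      refine ⟨e.symm w, Finset.mem_image.mpr ⟨w, hwS, rfl⟩, ?_⟩
      rw [hdist, e.apply_symm_apply]
      exact hw
    · intro x y hxy
      obtain ⟨z, hzS, hz⟩ := hSres (e x) (e y) (fun h => hxy (e.injective h))
      refine ⟨e.symm z, Finset.mem_image.mpr ⟨z, hzS, rfl⟩, ?_⟩
      rw [hdist, hdist, e.apply_symm_apply]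
      exact hz
  -- final arithmetic
  have hpow : N + 1 ≤ 2 ^ N := Nat.lt_two_pow_self (n := N)
  have hpow2 : 2 ^ m = 4 * 2 ^ N := by
    rw [hm]; ring
  refine ⟨n, G, ?_, hGconn, ?_⟩
  · omega
  · omega
end

section
/- Let G be a finite simple connected graph of order n ≥ 2, let k be a positive integer, and suppose γ_L^k(G) = β. Then n ≤ (⌊2(k+1)/3⌋ + 1)^β − 1 + β · Σ_{i=1}^{⌈(k+1)/3⌉} (2i − 1)^{β−1}. -/
open SimpleGraph Finset

/-- If `G` is a finite simple connected graph of order `n ≥ 2`, `k` a positive integer,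
and `γ_L^k(G) = β`, then
`n ≤ (⌊2(k+1)/3⌋ + 1)^β - 1 + β · Σ_{i=1}^{⌈(k+1)/3⌉} (2i - 1)^(β-1)`. -/
theorem stmt_11 {V : Type*} [Fintype V] (G : SimpleGraph V) (hG : G.Connected)
    (hn : 2 ≤ Fintype.card V) (k : ℕ) (hk : 1 ≤ k) (β : ℕ) (hβ : kld G k = β) :
    Fintype.card V ≤ (2 * (k + 1) / 3 + 1) ^ β - 1 +
      β * ∑ i ∈ Finset.Icc 1 ((k + 1 + 2) / 3), (2 * i - 1) ^ (β - 1) := by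
  classical
  -- obtain an optimal locating-dominating set S
  have hne : {m : ℕ | ∃ S : Finset V, IsKDomSet G k S ∧ IsKResSet G k S ∧ S.card = m}.Nonempty := by
    refine ⟨(Finset.univ : Finset V).card, Finset.univ, ?_, ?_, rfl⟩
    · intro u hu; exact absurd (Finset.mem_univ u) hu
    · intro x y hxy
      refine ⟨x, Finset.mem_univ x, ?_⟩
      have h1 : G.dist x x = 0 := SimpleGraph.dist_self
      have h2 : 0 < G.dist y x := hG.pos_dist_of_ne (Ne.symm hxy)
      omega
  have hmem := Nat.sInf_mem hne
  rw [show sInf {m : ℕ | ∃ S : Finset V, IsKDomSet G k S ∧ IsKResSet G k S ∧ S.card = m} = kld G k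
    from rfl, hβ] at hmem
  obtain ⟨S, hdom, hres, hcard⟩ := hmem
  -- β ≥ 1
  have hβ1 : 1 ≤ β := by
    by_contra h
    have hβ0 : β = 0 := by omega
    have hS : S = ∅ := Finset.card_eq_zero.mp (by rw [hcard, hβ0])
    obtain ⟨x, y, hxy⟩ := Fintype.exists_pair_of_one_lt_card (α := V) (by omega)
    obtain ⟨z, hz, _⟩ := hres x y hxy
    rw [hS] at hz; exact absurd hz (Finset.notMem_empty z)
  set r : ℕ := (k + 1 + 2) / 3 with hr
  have hr1 : 1 ≤ r := by omega
  have hrk : r ≤ k + 1 := by omega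
  -- the truncated distance vector
  set f : V → ({x // x ∈ S} → ℕ) := fun v z => min (G.dist v z.1) (k + 1) with hf
  have hinj : Function.Injective f := by
    intro x y hxy
    by_contra hne'
    obtain ⟨z, hz, hzne⟩ := hres x y hne'
    exact hzne (congrFun hxy ⟨z, hz⟩)
  have hcardS : Fintype.card {x // x ∈ S} = β := by rw [Fintype.card_coe, hcard]
  -- target finsets
  set A : Finset ({x // x ∈ S} → ℕ) :=
    (Fintype.piFinset fun _ => Finset.Icc r (k + 1)).erase (fun _ => k + 1) with hA
  set B : {x // x ∈ S} → ℕ → Finset ({x // x ∈ S} → ℕ) := fun i j =>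
    Fintype.piFinset fun i' =>
      if i' = i then {j}
      else Finset.Icc (min (G.dist i.1 i'.1) (k + 1) - j) (min (G.dist i.1 i'.1) (k + 1) + j)
    with hB
  -- every vector is in A or some B i j
  have hsub : Finset.univ.image f ⊆
      A ∪ Finset.univ.biUnion (fun i => (Finset.range r).biUnion (B i)) := by
    intro w hw
    obtain ⟨v, _, rfl⟩ := Finset.mem_image.mp hw
    by_cases hcase : ∃ i : {x // x ∈ S}, f v i < r
    · obtain ⟨i, hi⟩ := hcase
      refine Finset.mem_union_right _ (Finset.mem_biUnion.mpr ⟨i, Finset.mem_univ i,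
        Finset.mem_biUnion.mpr ⟨f v i, Finset.mem_range.mpr hi, ?_⟩⟩)
      have hdvi : G.dist v i.1 = f v i := by
        have : f v i = min (G.dist v i.1) (k + 1) := rfl
        omega
      refine Fintype.mem_piFinset.mpr fun i' => ?_
      by_cases h' : i' = i
      · simp [h']
      · rw [if_neg h']
        have ht1 : G.dist v i'.1 ≤ G.dist v i.1 + G.dist i.1 i'.1 := hG.dist_triangle
        have ht2 : G.dist i.1 i'.1 ≤ G.dist i.1 v + G.dist v i'.1 := hG.dist_triangle
        have hsym : G.dist i.1 v = G.dist v i.1 := SimpleGraph.dist_comm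
        have h1 : f v i' = min (G.dist v i'.1) (k + 1) := rfl
        rw [Finset.mem_Icc]
        omega
    · push_neg at hcase
      refine Finset.mem_union_left _ (Finset.mem_erase.mpr ⟨?_, ?_⟩)
      · -- f v ≠ const (k+1): use domination or membership
        by_cases hvS : v ∈ S
        · have : f v ⟨v, hvS⟩ = 0 := by
            have : G.dist v v = 0 := SimpleGraph.dist_self
            simp [hf, this]
          have h2 := hcase ⟨v, hvS⟩
          omega
        · obtain ⟨z, hz, hzk⟩ := hdom v hvS
          intro hcontra
          have h1 := congrFun hcontra ⟨z, hz⟩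
          have h2 : f v ⟨z, hz⟩ = min (G.dist v z) (k + 1) := rfl
          change f v ⟨z, hz⟩ = k + 1 at h1
          omega
      · refine Fintype.mem_piFinset.mpr fun i' => Finset.mem_Icc.mpr ⟨hcase i', ?_⟩
        have : f v i' = min (G.dist v i'.1) (k + 1) := rfl
        omega
  -- counting
  have hcount : Fintype.card V = (Finset.univ.image f).card := by
    rw [Finset.card_image_of_injective _ hinj, Finset.card_univ]
  have hAcard : A.card ≤ (2 * (k + 1) / 3 + 1) ^ β - 1 := by
    have hmem' : (fun _ => k + 1) ∈ Fintype.piFinset fun _ : {x // x ∈ S} =>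
        Finset.Icc r (k + 1) :=
      Fintype.mem_piFinset.mpr fun _ => Finset.mem_Icc.mpr ⟨hrk, le_refl _⟩
    rw [hA, Finset.card_erase_of_mem hmem', Fintype.card_piFinset]
    have h1 : ∀ i' : {x // x ∈ S}, (Finset.Icc r (k+1)).card = k + 2 - r := fun _ => by
      rw [Nat.card_Icc]
    rw [Finset.prod_congr rfl (fun i _ => h1 i), Finset.prod_const, Finset.card_univ, hcardS]
    have h2 : k + 2 - r ≤ 2 * (k + 1) / 3 + 1 := by omega
    exact Nat.sub_le_sub_right (Nat.pow_le_pow_left h2 β) 1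
  have hBcard : ∀ (i : {x // x ∈ S}) (j : ℕ), (B i j).card ≤ (2 * j + 1) ^ (β - 1) := by
    intro i j
    rw [hB, Fintype.card_piFinset]
    calc ∏ i' : {x // x ∈ S}, (if i' = i then ({j} : Finset ℕ)
          else Finset.Icc (min (G.dist i.1 i'.1) (k + 1) - j)
            (min (G.dist i.1 i'.1) (k + 1) + j)).card
        = ∏ i' ∈ Finset.univ.erase i, (if i' = i then ({j} : Finset ℕ)
          else Finset.Icc (min (G.dist i.1 i'.1) (k + 1) - j)
            (min (G.dist i.1 i'.1) (k + 1) + j)).card := by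
          rw [← Finset.prod_erase_mul _ _ (Finset.mem_univ i)]
          simp
      _ ≤ (2 * j + 1) ^ (Finset.univ.erase i).card := by
          refine Finset.prod_le_pow_card _ _ _ fun i' hi' => ?_
          rw [if_neg (Finset.ne_of_mem_erase hi'), Nat.card_Icc]
          omega
      _ = (2 * j + 1) ^ (β - 1) := by
          rw [Finset.card_erase_of_mem (Finset.mem_univ i), Finset.card_univ, hcardS]
  calc Fintype.card V
      = (Finset.univ.image f).card := hcount
    _ ≤ (A ∪ Finset.univ.biUnion (fun i => (Finset.range r).biUnion (B i))).card :=
        Finset.card_le_card hsub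
    _ ≤ A.card + (Finset.univ.biUnion (fun i => (Finset.range r).biUnion (B i))).card :=
        Finset.card_union_le _ _
    _ ≤ A.card + ∑ i : {x // x ∈ S}, ((Finset.range r).biUnion (B i)).card := by
        exact Nat.add_le_add_left (Finset.card_biUnion_le) _
    _ ≤ A.card + ∑ i : {x // x ∈ S}, ∑ j ∈ Finset.range r, (B i j).card := by
        refine Nat.add_le_add_left (Finset.sum_le_sum fun i _ => Finset.card_biUnion_le) _
    _ ≤ (2 * (k + 1) / 3 + 1) ^ β - 1 +
        ∑ i : {x // x ∈ S}, ∑ j ∈ Finset.range r, (2 * j + 1) ^ (β - 1) := by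
        exact Nat.add_le_add hAcard (Finset.sum_le_sum fun i _ =>
          Finset.sum_le_sum fun j _ => hBcard i j)
    _ = (2 * (k + 1) / 3 + 1) ^ β - 1 +
        β * ∑ i ∈ Finset.Icc 1 r, (2 * i - 1) ^ (β - 1) := by
        congr 1
        rw [Finset.sum_const, smul_eq_mul, Finset.card_univ, hcardS]
        congr 1
        rw [show Finset.Icc 1 r = Finset.Ico 1 (r + 1) by rw [Finset.Ico_add_one_right_eq_Icc]]
        rw [Finset.sum_Ico_eq_sum_range]
        refine Finset.sum_congr (by rw [Nat.add_sub_cancel]) fun j _ => ?_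
        congr 1
        omega
end

section
/- For every tree T of order n ≥ 2 and every positive integer k, γ_L^k(T) ≤ n − ex(T), where ex(T) is the number of exterior major vertices of T. -/
open SimpleGraph Finset

/-- The degree of a vertex. -/
noncomputable def deg {V : Type*} (G : SimpleGraph V) (v : V) : ℕ :=
  Nat.card {u : V // G.Adj v u}

/-- A leaf is a vertex of degree one. -/
def IsLeafVtx {V : Type*} (G : SimpleGraph V) (v : V) : Prop := deg G v = 1

/-- A major vertex is a vertex of degree at least three. -/
def IsMajorVtx {V : Type*} (G : SimpleGraph V) (v : V) : Prop := 3 ≤ deg G v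

/-- A leaf `l` is a terminal vertex of a major vertex `v` if `d(l,v) < d(l,w)` for
every other major vertex `w`. -/
def IsTerminalOf {V : Type*} (G : SimpleGraph V) (l v : V) : Prop :=
  IsLeafVtx G l ∧ IsMajorVtx G v ∧
    ∀ w : V, IsMajorVtx G w → w ≠ v → G.dist l v < G.dist l w

/-- An exterior major vertex is a major vertex having at least one terminal vertex. -/
def IsExteriorMajor {V : Type*} (G : SimpleGraph V) (v : V) : Prop :=
  IsMajorVtx G v ∧ ∃ l : V, IsTerminalOf G l v

/-- `ex(G)`: the number of exterior major vertices. -/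
noncomputable def exMaj {V : Type*} (G : SimpleGraph V) : ℕ :=
  Nat.card {v : V // IsExteriorMajor G v}

/-- `σ(G)`: the number of leaves. -/
noncomputable def numLeaves {V : Type*} (G : SimpleGraph V) : ℕ :=
  Nat.card {v : V // IsLeafVtx G v}


/-- Toward a terminal vertex: a neighbor strictly closer to `l`. -/
lemma exists_closer_neighbor {V : Type*} (G : SimpleGraph V) (hc : G.Connected)
    {u l : V} (hne : u ≠ l) : ∃ z : V, G.Adj u z ∧ G.dist l z < G.dist l u := by
  have hd : G.dist u l ≠ 0 := by
    have := hc.pos_dist_of_ne hne; omega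
  obtain ⟨p, hp⟩ := SimpleGraph.exists_walk_of_dist_ne_zero hd
  cases p with
  | nil => simp at hp; simp at hd
  | cons h q =>
    rename_i z
    refine ⟨z, h, ?_⟩
    have h1 : G.dist z l ≤ q.length := SimpleGraph.dist_le q
    have h2 : q.length + 1 = G.dist u l := by simpa using hp
    have h3 : G.dist l z = G.dist z l := SimpleGraph.dist_comm
    have h4 : G.dist l u = G.dist u l := SimpleGraph.dist_comm
    omega


/-- For every tree `T` of order `n ≥ 2` and positive integer `k`,
`γ_L^k(T) ≤ n - ex(T)`. -/
theorem stmt_12 {V : Type*} [Fintype V] (T : SimpleGraph V) (hT : T.IsTree)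
    (hn : 2 ≤ Fintype.card V) (k : ℕ) (hk : 1 ≤ k) :
    kld T k ≤ Fintype.card V - exMaj T := by
  classical
  have hc : T.Connected := hT.isConnected
  set S : Finset V := Finset.univ.filter (fun v => ¬ IsExteriorMajor T v) with hS
  -- key: a suitable witness neighbor for each exterior major vertex
  have key : ∀ u : V, IsExteriorMajor T u → ∃ z ∈ S, T.Adj u z ∧
      ∀ y : V, IsMajorVtx T y → y ≠ u → 2 ≤ T.dist y z := by
    intro u ⟨hmaj, l, hl⟩
    have hlu : u ≠ l := by
      intro h; subst h
      have h1 := hl.1; have h2 := hl.2.1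
      unfold IsLeafVtx at h1; unfold IsMajorVtx at h2; omega
    obtain ⟨z, hadj, hz⟩ := exists_closer_neighbor T hc hlu
    have hznm : ¬ IsMajorVtx T z := by
      intro hzm
      rcases eq_or_ne z u with rfl | hzu
      · omega
      · exact absurd (hl.2.2 z hzm hzu) (by omega)
    refine ⟨z, by simp [hS, IsExteriorMajor, hznm], hadj, ?_⟩
    intro y hy hyu
    have h1 : T.dist l u < T.dist l y := hl.2.2 y hy hyu
    have h2 : T.dist l y ≤ T.dist l z + T.dist z y := hc.dist_triangle
    have h3 : T.dist y z = T.dist z y := SimpleGraph.dist_comm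
    omega
  have hdom : IsKDomSet T k S := by
    intro u hu
    have hu' : IsExteriorMajor T u := by
      by_contra h; exact hu (by simp [hS, h])
    obtain ⟨z, hzS, hadj, -⟩ := key u hu'
    exact ⟨z, hzS, by rw [SimpleGraph.dist_eq_one_iff_adj.mpr hadj]; omega⟩
  have hres : IsKResSet T k S := by
    have easy : ∀ x y : V, x ≠ y → x ∈ S → ∃ z ∈ S,
        min (T.dist x z) (k + 1) ≠ min (T.dist y z) (k + 1) := by
      intro x y hxy hxS
      refine ⟨x, hxS, ?_⟩
      have h0 : T.dist x x = 0 := SimpleGraph.dist_self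
      have h1 : 0 < T.dist y x := hc.pos_dist_of_ne (Ne.symm hxy)
      omega
    intro x y hxy
    by_cases hxS : x ∈ S
    · exact easy x y hxy hxS
    by_cases hyS : y ∈ S
    · obtain ⟨z, hz, hne⟩ := easy y x (Ne.symm hxy) hyS
      exact ⟨z, hz, Ne.symm hne⟩
    have hx : IsExteriorMajor T x := by
      by_contra h; exact hxS (by simp [hS, h])
    have hy : IsExteriorMajor T y := by
      by_contra h; exact hyS (by simp [hS, h])
    obtain ⟨z, hzS, hadj, hfar⟩ := key x hx
    refine ⟨z, hzS, ?_⟩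
    have h1 : T.dist x z = 1 := SimpleGraph.dist_eq_one_iff_adj.mpr hadj
    have h2 : 2 ≤ T.dist y z := hfar y hy.1 (Ne.symm hxy)
    omega
  have hcard : S.card = Fintype.card V - exMaj T := by
    have hEx : exMaj T = (Finset.univ.filter (fun v => IsExteriorMajor T v)).card := by
      rw [exMaj, Nat.card_eq_fintype_card, Fintype.card_subtype]
    have := Finset.card_filter_add_card_filter_not
      (s := (Finset.univ : Finset V)) (p := fun v => IsExteriorMajor T v)
    simp only [Finset.card_univ] at this
    rw [hS]; omega
  calc kld T k ≤ S.card := Nat.sInf_le ⟨S, hdom, hres, rfl⟩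
    _ = _ := hcard
end

section
/- Let m ≥ 2 and let G = K_{a_1,a_2,...,a_m} be the complete m-partite graph with part sizes a_1,...,a_m ≥ 1 and order n = a_1 + ... + a_m ≥ 3, and let k be a positive integer. If k = 1 and G is isomorphic to the star K_{1,n−1}, then γ_L^k(G) = n − 1 = dim_k(G) + 1; in all other cases γ_L^k(G) = dim_k(G). -/
open SimpleGraph Finset

section KG
variable {m : ℕ} (a : Fin m → ℕ)

private abbrev KG : SimpleGraph (Σ i, Fin (a i)) := completeMultipartiteGraph fun i => Fin (a i)

variable {a}

private lemma KG_adj {x y : Σ i, Fin (a i)} : (KG a).Adj x y ↔ x.1 ≠ y.1 := Iff.rfl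

private lemma KG_dist_of_ne_fst {x y : Σ i, Fin (a i)} (h : x.1 ≠ y.1) :
    (KG a).dist x y = 1 := dist_eq_one_iff_adj.mpr h

private lemma KG_dist_of_eq_fst (hm : 2 ≤ m) (ha : ∀ i, 1 ≤ a i)
    {x y : Σ i, Fin (a i)} (hxy : x ≠ y) (h : x.1 = y.1) :
    (KG a).dist x y = 2 := by
  have : Nontrivial (Fin m) := Fin.nontrivial_iff_two_le.mpr hm
  obtain ⟨j, hj⟩ := exists_ne x.1
  set w : Σ i, Fin (a i) := ⟨j, ⟨0, ha j⟩⟩ with hw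
  have h1 : (KG a).Adj x w := by rw [KG_adj]; exact fun hh => hj hh.symm
  have h2 : (KG a).Adj w y := by rw [KG_adj]; rw [← h]; exact hj
  let p : (KG a).Walk x y := Walk.cons h1 (Walk.cons h2 Walk.nil)
  have hle : (KG a).dist x y ≤ 2 := by
    have := (KG a).dist_le p
    simpa [p] using this
  have h0 : (KG a).dist x y ≠ 0 :=
    dist_ne_zero_iff_ne_and_reachable.mpr ⟨hxy, p.reachable⟩
  have hone : (KG a).dist x y ≠ 1 := by
    intro hh
    exact (dist_eq_one_iff_adj.mp hh) h
  omega

private lemma KG_dist_le_two (hm : 2 ≤ m) (ha : ∀ i, 1 ≤ a i) (x y : Σ i, Fin (a i)) :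
    (KG a).dist x y ≤ 2 := by
  by_cases hxy : x = y
  · subst hxy; rw [SimpleGraph.dist_self]; omega
  by_cases h : x.1 = y.1
  · rw [KG_dist_of_eq_fst hm ha hxy h]
  · rw [KG_dist_of_ne_fst h]; omega

private lemma KG_dist_pos (hm : 2 ≤ m) (ha : ∀ i, 1 ≤ a i)
    {x y : Σ i, Fin (a i)} (hxy : x ≠ y) : 1 ≤ (KG a).dist x y := by
  by_cases h : x.1 = y.1
  · rw [KG_dist_of_eq_fst hm ha hxy h]; omega
  · rw [KG_dist_of_ne_fst h]

private lemma KG_trunc (hm : 2 ≤ m) (ha : ∀ i, 1 ≤ a i) {k : ℕ} (hk : 1 ≤ k)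
    (x y : Σ i, Fin (a i)) :
    min ((KG a).dist x y) (k + 1) = (KG a).dist x y :=
  min_eq_left (le_trans (KG_dist_le_two hm ha x y) (by omega))

private lemma KG_res_iff (hm : 2 ≤ m) (ha : ∀ i, 1 ≤ a i) {k : ℕ} (hk : 1 ≤ k)
    (R : Finset (Σ i, Fin (a i))) :
    IsKResSet (KG a) k R ↔
      ∀ x y, x ≠ y → ∃ z ∈ R, (KG a).dist x z ≠ (KG a).dist y z := by
  unfold IsKResSet
  constructor <;> intro h x y hxy <;> obtain ⟨z, hz, hne⟩ := h x y hxy <;>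
    exact ⟨z, hz, by simpa only [KG_trunc hm ha hk] using hne⟩

end KG

section KG2
variable {m : ℕ} {a : Fin m → ℕ}

variable (a) in
private def lab (v : Σ i, Fin (a i)) : Fin m ⊕ Unit :=
  if a v.1 = 1 then Sum.inr () else Sum.inl v.1

private lemma sigma_eq_of_fst_eq {x y : Σ i, Fin (a i)} (h : x.1 = y.1)
    (h1 : a x.1 = 1) : x = y := by
  obtain ⟨xi, xv⟩ := x; obtain ⟨yi, yv⟩ := y
  dsimp at h h1; subst h
  have h2 := xv.isLt; have h3 := yv.isLt
  have : xv = yv := Fin.ext (by omega)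
  rw [this]

private lemma lab_eq_inl {x : Σ i, Fin (a i)} (h1 : a x.1 ≠ 1) : lab a x = Sum.inl x.1 := by
  simp [lab, h1]

private lemma lab_eq_inr {x : Σ i, Fin (a i)} (h1 : a x.1 = 1) : lab a x = Sum.inr () := by
  simp [lab, h1]

private lemma twin (hm : 2 ≤ m) (ha : ∀ i, 1 ≤ a i) {x y : Σ i, Fin (a i)} (hxy : x ≠ y)
    (hl : lab a x = lab a y) {z : Σ i, Fin (a i)} (hzx : z ≠ x) (hzy : z ≠ y) :
    (KG a).dist x z = (KG a).dist y z := by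
  by_cases h1 : a x.1 = 1
  · have h2 : a y.1 = 1 := by
      by_contra h2
      rw [lab_eq_inr h1, lab_eq_inl h2] at hl
      cases hl
    have hzx1 : x.1 ≠ z.1 := fun h => hzx (sigma_eq_of_fst_eq h h1).symm
    have hzy1 : y.1 ≠ z.1 := fun h => hzy (sigma_eq_of_fst_eq h h2).symm
    rw [KG_dist_of_ne_fst hzx1, KG_dist_of_ne_fst hzy1]
  · have h2 : a y.1 ≠ 1 := by
      by_contra h2
      rw [lab_eq_inl h1, lab_eq_inr h2] at hl
      cases hl
    rw [lab_eq_inl h1, lab_eq_inl h2] at hl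
    have hfst : x.1 = y.1 := Sum.inl.inj hl
    by_cases hz : z.1 = x.1
    · rw [KG_dist_of_eq_fst hm ha (Ne.symm hzx) hz.symm,
        KG_dist_of_eq_fst hm ha (Ne.symm hzy) (hfst ▸ hz).symm]
    · rw [KG_dist_of_ne_fst (Ne.symm hz), KG_dist_of_ne_fst (Ne.symm (hfst ▸ hz))]

open Classical in
private lemma res_lower (hm : 2 ≤ m) (ha : ∀ i, 1 ≤ a i) {k : ℕ} (hk : 1 ≤ k)
    {R : Finset (Σ i, Fin (a i))} (hR : IsKResSet (KG a) k R) :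
    Fintype.card (Σ i, Fin (a i)) - ((univ : Finset (Σ i, Fin (a i))).image (lab a)).card
      ≤ R.card := by
  classical
  have hinj : Set.InjOn (lab a) (Rᶜ : Finset _) := by
    intro x hx y hy hl
    by_contra hxy
    obtain ⟨z, hz, hne⟩ := (KG_res_iff hm ha hk R).mp hR x y hxy
    have hzx : z ≠ x := fun h => (mem_compl.mp (mem_coe.mp hx)) (h ▸ hz)
    have hzy : z ≠ y := fun h => (mem_compl.mp (mem_coe.mp hy)) (h ▸ hz)
    exact hne (twin hm ha hxy hl hzx hzy)
  have h1 : (Rᶜ).card ≤ ((univ : Finset (Σ i, Fin (a i))).image (lab a)).card := by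
    calc (Rᶜ).card = ((Rᶜ).image (lab a)).card := (card_image_of_injOn hinj).symm
    _ ≤ _ := card_le_card (image_subset_image (subset_univ _))
  have h2 : R.card + (Rᶜ).card = Fintype.card (Σ i, Fin (a i)) := card_add_card_compl R
  omega

end KG2
section KG3
variable {m : ℕ} {a : Fin m → ℕ}

open Classical in
variable (a) in
private noncomputable def sec (hm : 2 ≤ m) (ha : ∀ i, 1 ≤ a i) :
    Fin m ⊕ Unit → Σ i, Fin (a i)
  | Sum.inl i => ⟨i, ⟨0, ha i⟩⟩
  | Sum.inr _ =>
      if h : ∃ i, a i = 1 then ⟨h.choose, ⟨0, ha _⟩⟩ else ⟨⟨0, by omega⟩, ⟨0, ha _⟩⟩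

open Classical in
private lemma lab_sec (hm : 2 ≤ m) (ha : ∀ i, 1 ≤ a i) {l : Fin m ⊕ Unit}
    (hl : l ∈ (univ : Finset (Σ i, Fin (a i))).image (lab a)) :
    lab a (sec a hm ha l) = l := by
  classical
  obtain ⟨v, -, hv⟩ := mem_image.mp hl
  cases l with
  | inl i =>
    have h1 : a v.1 ≠ 1 := by
      intro h; rw [lab_eq_inr h] at hv; cases hv
    rw [lab_eq_inl h1] at hv
    have hvi : v.1 = i := Sum.inl.inj hv
    have h2 : a i ≠ 1 := hvi ▸ h1
    show lab a ⟨i, ⟨0, ha i⟩⟩ = Sum.inl i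
    exact lab_eq_inl h2
  | inr u =>
    have h1 : a v.1 = 1 := by
      by_contra h; rw [lab_eq_inl h] at hv; cases hv
    have hex : ∃ i, a i = 1 := ⟨v.1, h1⟩
    show lab a (sec a hm ha (Sum.inr u)) = Sum.inr u
    rw [show sec a hm ha (Sum.inr u) = ⟨hex.choose, ⟨0, ha _⟩⟩ from by
      simp only [sec, dif_pos hex]]
    rw [lab_eq_inr hex.choose_spec]

variable (a) in
open Classical in
private noncomputable def E0 (hm : 2 ≤ m) (ha : ∀ i, 1 ≤ a i) : Finset (Σ i, Fin (a i)) :=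
  ((univ : Finset (Σ i, Fin (a i))).image (lab a)).image (sec a hm ha)

open Classical in
private lemma mem_E0_iff (hm : 2 ≤ m) (ha : ∀ i, 1 ≤ a i) {v : Σ i, Fin (a i)} :
    v ∈ E0 a hm ha ↔ v = sec a hm ha (lab a v) := by
  classical
  constructor
  · intro hv
    obtain ⟨l, hl, hlv⟩ := mem_image.mp hv
    rw [← hlv, lab_sec hm ha hl]
  · intro hv
    rw [hv]
    exact mem_image_of_mem _ (mem_image_of_mem _ (mem_univ v))

open Classical in
private lemma card_E0 (hm : 2 ≤ m) (ha : ∀ i, 1 ≤ a i) :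
    (E0 a hm ha).card = ((univ : Finset (Σ i, Fin (a i))).image (lab a)).card := by
  classical
  apply card_image_of_injOn
  intro l1 h1 l2 h2 he
  have := lab_sec hm ha (mem_coe.mp h1)
  rw [he, lab_sec hm ha (mem_coe.mp h2)] at this
  exact this.symm

open Classical in
private lemma key_res (hm : 2 ≤ m) (ha : ∀ i, 1 ≤ a i) {x y : Σ i, Fin (a i)}
    (hx : x ∈ E0 a hm ha) (hy : y ∈ E0 a hm ha) (hxy : x ≠ y) (h1 : a x.1 ≠ 1) :
    ∃ z ∈ (E0 a hm ha)ᶜ, (KG a).dist x z ≠ (KG a).dist y z := by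
  classical
  have h2 : 2 ≤ a x.1 := by have := ha x.1; omega
  have hz1 : (1 : ℕ) < a x.1 := h2
  have hlabz : lab a (⟨x.1, ⟨1, hz1⟩⟩ : Σ i, Fin (a i)) = Sum.inl x.1 := lab_eq_inl h1
  have hzE : (⟨x.1, ⟨1, hz1⟩⟩ : Σ i, Fin (a i)) ∉ E0 a hm ha := by
    rw [mem_E0_iff hm ha, hlabz]
    intro h
    have h' := congrArg (fun v : (Σ i, Fin (a i)) => (v.2 : ℕ)) h
    simp [sec] at h'
  have hfst : y.1 ≠ x.1 := by
    intro h
    have hly : lab a y = Sum.inl x.1 := h ▸ lab_eq_inl (h ▸ h1)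
    have hlx : lab a x = Sum.inl x.1 := lab_eq_inl h1
    apply hxy
    rw [(mem_E0_iff hm ha).mp hx, (mem_E0_iff hm ha).mp hy, hlx, hly]
  refine ⟨⟨x.1, ⟨1, hz1⟩⟩, mem_compl.mpr hzE, ?_⟩
  have hx_z : x ≠ (⟨x.1, ⟨1, hz1⟩⟩ : Σ i, Fin (a i)) := fun h => hzE (h ▸ hx)
  rw [KG_dist_of_eq_fst hm ha hx_z rfl,
    KG_dist_of_ne_fst (show y.1 ≠ (⟨x.1, ⟨1, hz1⟩⟩ : Σ i, Fin (a i)).1 from hfst)]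
  omega

open Classical in
private lemma res_E0c (hm : 2 ≤ m) (ha : ∀ i, 1 ≤ a i) {k : ℕ} (hk : 1 ≤ k) :
    IsKResSet (KG a) k ((E0 a hm ha)ᶜ) := by
  classical
  rw [KG_res_iff hm ha hk]
  intro x y hxy
  by_cases hx : x ∈ E0 a hm ha
  swap
  · refine ⟨x, mem_compl.mpr hx, ?_⟩
    have := KG_dist_pos hm ha (Ne.symm hxy)
    rw [SimpleGraph.dist_self]
    omega
  by_cases hy : y ∈ E0 a hm ha
  swap
  · refine ⟨y, mem_compl.mpr hy, ?_⟩
    have := KG_dist_pos hm ha hxy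
    rw [SimpleGraph.dist_self (G := KG a) (v := y)]
    omega
  by_cases h1 : a x.1 = 1
  · have h2 : a y.1 ≠ 1 := by
      intro h2
      apply hxy
      rw [(mem_E0_iff hm ha).mp hx, (mem_E0_iff hm ha).mp hy, lab_eq_inr h1, lab_eq_inr h2]
    obtain ⟨z, hz, hne⟩ := key_res hm ha hy hx (Ne.symm hxy) h2
    exact ⟨z, hz, hne.symm⟩
  · exact key_res hm ha hx hy hxy h1

end KG3
section KG4
variable {m : ℕ} {a : Fin m → ℕ}

open Classical in
private lemma snd_one_not_mem_E0 (hm : 2 ≤ m) (ha : ∀ i, 1 ≤ a i) {j : Fin m}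
    (h2 : 1 < a j) : (⟨j, ⟨1, h2⟩⟩ : Σ i, Fin (a i)) ∉ E0 a hm ha := by
  have h1 : a j ≠ 1 := by omega
  rw [mem_E0_iff hm ha, lab_eq_inl (show a (⟨j, ⟨1, h2⟩⟩ : Σ i, Fin (a i)).1 ≠ 1 from h1)]
  intro h
  have h' := congrArg (fun v : (Σ i, Fin (a i)) => (v.2 : ℕ)) h
  simp [sec] at h'

open Classical in
private lemma exists_not_mem_E0 (hm : 2 ≤ m) (ha : ∀ i, 1 ≤ a i) :
    ∃ w, w ∉ E0 a hm ha := by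
  by_cases h : ∃ i, 2 ≤ a i
  · obtain ⟨i, hi⟩ := h
    exact ⟨⟨i, ⟨1, hi⟩⟩, snd_one_not_mem_E0 hm ha hi⟩
  · push_neg at h
    have hall : ∀ i, a i = 1 := fun i => by have := ha i; have := h i; omega
    have : Nontrivial (Fin m) := Fin.nontrivial_iff_two_le.mpr hm
    obtain ⟨j, hj⟩ := exists_ne (sec a hm ha (Sum.inr ())).1
    refine ⟨⟨j, ⟨0, ha j⟩⟩, ?_⟩
    rw [mem_E0_iff hm ha, lab_eq_inr (hall j)]
    intro h'
    exact hj (congrArg Sigma.fst h')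

open Classical in
private lemma dom_E0c_two (hm : 2 ≤ m) (ha : ∀ i, 1 ≤ a i) {k : ℕ} (hk : 2 ≤ k) :
    IsKDomSet (KG a) k ((E0 a hm ha)ᶜ) := by
  intro u _
  obtain ⟨w, hw⟩ := exists_not_mem_E0 hm ha
  exact ⟨w, mem_compl.mpr hw, le_trans (KG_dist_le_two hm ha u w) hk⟩

open Classical in
private lemma dom_E0c_one (hm : 2 ≤ m) (ha : ∀ i, 1 ≤ a i)
    (hns : ∀ i j : Fin m, i ≠ j → (∀ l, l = i ∨ l = j) → a j = 1 → False) :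
    IsKDomSet (KG a) 1 ((E0 a hm ha)ᶜ) := by
  intro u hu
  by_cases hA : ∃ j, j ≠ u.1 ∧ 2 ≤ a j
  · obtain ⟨j, hju, hj2⟩ := hA
    refine ⟨⟨j, ⟨1, hj2⟩⟩, mem_compl.mpr (snd_one_not_mem_E0 hm ha hj2), ?_⟩
    rw [KG_dist_of_ne_fst (show u.1 ≠ (⟨j, ⟨1, hj2⟩⟩ : Σ i, Fin (a i)).1 from
      fun h => hju h.symm)]
  · push_neg at hA
    have hB : ∀ j, j ≠ u.1 → a j = 1 := fun j hj => by have := ha j; have := hA j hj; omega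
    set c := sec a hm ha (Sum.inr ()) with hc
    by_cases hC : ∃ j, j ≠ u.1 ∧ j ≠ c.1
    · obtain ⟨j, hju, hjc⟩ := hC
      have haj : a j = 1 := hB j hju
      refine ⟨⟨j, ⟨0, ha j⟩⟩, mem_compl.mpr ?_, ?_⟩
      · rw [mem_E0_iff hm ha, lab_eq_inr haj]
        intro h'
        exact hjc (congrArg Sigma.fst h')
      · rw [KG_dist_of_ne_fst (show u.1 ≠ (⟨j, ⟨0, ha j⟩⟩ : Σ i, Fin (a i)).1 from
          fun h => hju h.symm)]
    · push_neg at hC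
      have hcu : c.1 ≠ u.1 := by
        intro hcu
        have : Nontrivial (Fin m) := Fin.nontrivial_iff_two_le.mpr hm
        obtain ⟨j, hj⟩ := exists_ne u.1
        exact hj (by_contra fun h => hj ((hC j hj).trans hcu))
      exact absurd (hB c.1 hcu) (fun h =>
        hns u.1 c.1 (Ne.symm hcu) (fun l => (Classical.em (l = u.1)).elim Or.inl
          (fun hl => Or.inr (hC l hl))) h)

private lemma sum_eq_pair {i j : Fin m} (hij : i ≠ j) (huniv : ∀ l, l = i ∨ l = j) :
    ∑ l, a l = a i + a j := by
  have huniv' : (univ : Finset (Fin m)) = {i, j} := by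
    ext l
    simpa using huniv l
  rw [huniv', sum_pair hij]

private lemma star_iso (hm : 2 ≤ m) (ha : ∀ i, 1 ≤ a i) {i j : Fin m} (hij : i ≠ j)
    (huniv : ∀ l, l = i ∨ l = j) (haj : a j = 1) :
    Nonempty ((KG a) ≃g completeBipartiteGraph (Fin 1) (Fin (∑ l, a l - 1))) := by
  classical
  have hsum : ∑ l, a l = a i + a j := sum_eq_pair hij huniv
  have hai : a i = ∑ l, a l - 1 := by omega
  refine ⟨⟨Equiv.mk
    (fun v => if h : v.1 = i then
        Sum.inr ⟨(v.2 : ℕ), by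
          have h2 := v.2.isLt
          have h3 : a v.1 = a i := by rw [h]
          omega⟩
      else Sum.inl 0)
    (fun s => match s with
      | Sum.inl _ => ⟨j, ⟨0, ha j⟩⟩
      | Sum.inr c => ⟨i, ⟨(c : ℕ), by have := c.isLt; omega⟩⟩)
    ?_ ?_, ?_⟩⟩
  · intro v
    by_cases h : v.1 = i
    · simp only [dif_pos h]
      obtain ⟨v1, v2⟩ := v
      dsimp at h
      subst h
      exact congrArg (Sigma.mk v1) (Fin.ext rfl)
    · have hvj : v.1 = j := (huniv v.1).resolve_left h
      simp only [dif_neg h]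
      exact (sigma_eq_of_fst_eq (show (⟨j, ⟨0, ha j⟩⟩ : Σ l, Fin (a l)).1 = v.1 from hvj.symm)
        haj)
  · intro s
    cases s with
    | inl c =>
      simp only [dif_neg (show j ≠ i from Ne.symm hij)]
      exact congrArg Sum.inl (Subsingleton.elim _ _)
    | inr c =>
      simp only [dif_pos rfl]
      exact congrArg Sum.inr (Fin.ext rfl)
  · intro v w
    by_cases hv : v.1 = i <;> by_cases hw : w.1 = i
    · simp only [Equiv.coe_fn_mk, dif_pos hv, dif_pos hw]
      simp [completeBipartiteGraph, KG_adj, hv.trans hw.symm]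
    · simp only [Equiv.coe_fn_mk, dif_pos hv, dif_neg hw]
      simp [completeBipartiteGraph, KG_adj]
      intro h
      rw [h] at hv
      exact hw hv
    · simp only [Equiv.coe_fn_mk, dif_neg hv, dif_pos hw]
      simp [completeBipartiteGraph, KG_adj]
      intro h
      rw [h] at hv
      exact hv hw
    · simp only [Equiv.coe_fn_mk, dif_neg hv, dif_neg hw]
      have hvj : v.1 = j := (huniv v.1).resolve_left hv
      have hwj : w.1 = j := (huniv w.1).resolve_left hw
      simp [completeBipartiteGraph, KG_adj, hvj.trans hwj.symm]

end KG4
section KG5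
variable {m : ℕ} {a : Fin m → ℕ}

private lemma star_structure (hm : 2 ≤ m) (ha : ∀ i, 1 ≤ a i) (hn : 3 ≤ ∑ l, a l)
    (h : Nonempty ((KG a) ≃g completeBipartiteGraph (Fin 1) (Fin (∑ l, a l - 1)))) :
    ∃ i j, i ≠ j ∧ (∀ l, l = i ∨ l = j) ∧ a j = 1 ∧ 2 ≤ a i := by
  classical
  obtain ⟨φ⟩ := h
  set v : Σ l, Fin (a l) := φ.symm (Sum.inl 0) with hv
  have hφv : φ v = Sum.inl 0 := by rw [hv]; exact φ.apply_symm_apply _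
  have himg : ∀ x : Σ l, Fin (a l), x ≠ v → ∃ t, φ x = Sum.inr t := by
    intro x hx
    cases hφx : φ x with
    | inl c =>
      exfalso
      apply hx
      have : φ x = Sum.inl 0 := by rw [hφx]; exact congrArg Sum.inl (Subsingleton.elim _ _)
      have := this.trans hφv.symm
      exact φ.injective this
    | inr t => exact ⟨t, rfl⟩
  have hadj : ∀ x : Σ l, Fin (a l), x ≠ v → (KG a).Adj v x := by
    intro x hx
    obtain ⟨t, ht⟩ := himg x hx
    have : (completeBipartiteGraph (Fin 1) (Fin (∑ l, a l - 1))).Adj (φ v) (φ x) := by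
      rw [hφv, ht]
      simp [completeBipartiteGraph]
    exact φ.map_rel_iff.mp this
  have hnadj : ∀ x y : Σ l, Fin (a l), x ≠ v → y ≠ v → x ≠ y → ¬(KG a).Adj x y := by
    intro x y hx hy hxy hadjxy
    obtain ⟨t1, ht1⟩ := himg x hx
    obtain ⟨t2, ht2⟩ := himg y hy
    have := φ.map_rel_iff.mpr hadjxy
    rw [ht1, ht2] at this
    simp [completeBipartiteGraph] at this
  -- the part of v is a singleton
  have haj : a v.1 = 1 := by
    by_contra hav
    have hav2 : 2 ≤ a v.1 := by have := ha v.1; omega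
    have : Nontrivial (Fin (a v.1)) := Fin.nontrivial_iff_two_le.mpr hav2
    obtain ⟨b, hb⟩ := exists_ne v.2
    have hxv : (⟨v.1, b⟩ : Σ l, Fin (a l)) ≠ v := by
      intro h
      exact hb ((Sigma.ext_iff.mp h).2.eq)
    exact (KG_adj.mp (hadj _ hxv)) rfl
  have : Nontrivial (Fin m) := Fin.nontrivial_iff_two_le.mpr hm
  obtain ⟨i, hi⟩ := exists_ne v.1
  have huniv : ∀ l, l = i ∨ l = v.1 := by
    intro l
    by_contra hl
    push_neg at hl
    obtain ⟨hl1, hl2⟩ := hl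
    have h1 : (⟨l, ⟨0, ha l⟩⟩ : Σ w, Fin (a w)) ≠ v := fun h => hl2 (congrArg Sigma.fst h)
    have h2 : (⟨i, ⟨0, ha i⟩⟩ : Σ w, Fin (a w)) ≠ v := fun h => hi (congrArg Sigma.fst h)
    have h3 : (⟨l, ⟨0, ha l⟩⟩ : Σ w, Fin (a w)) ≠ ⟨i, ⟨0, ha i⟩⟩ :=
      fun h => hl1 (congrArg Sigma.fst h)
    exact hnadj _ _ h1 h2 h3 (KG_adj.mpr hl1)
  have hsum : ∑ l, a l = a i + a v.1 := sum_eq_pair hi huniv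
  exact ⟨i, v.1, hi, huniv, haj, by omega⟩

end KG5
section KG6
variable {m : ℕ} {a : Fin m → ℕ}

variable (a) in
private def bigPart (i : Fin m) : Finset (Σ l, Fin (a l)) :=
  univ.image (fun b : Fin (a i) => ⟨i, b⟩)

private lemma mem_bigPart {i : Fin m} {v : Σ l, Fin (a l)} :
    v ∈ bigPart a i ↔ v.1 = i := by
  constructor
  · intro hv
    obtain ⟨b, -, hb⟩ := mem_image.mp hv
    exact congrArg Sigma.fst hb.symm
  · intro hv
    obtain ⟨v1, v2⟩ := v
    dsimp at hv
    subst hv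
    exact mem_image_of_mem _ (mem_univ v2)

private lemma card_bigPart (i : Fin m) : (bigPart a i).card = a i := by
  rw [bigPart, card_image_of_injective _ sigma_mk_injective, card_univ, Fintype.card_fin]

private lemma dom_bigPart (hm : 2 ≤ m) (ha : ∀ i, 1 ≤ a i) {k : ℕ} (hk : 1 ≤ k) (i : Fin m) :
    IsKDomSet (KG a) k (bigPart a i) := by
  intro u hu
  have hui : u.1 ≠ i := fun h => hu (mem_bigPart.mpr h)
  refine ⟨⟨i, ⟨0, ha i⟩⟩, mem_bigPart.mpr rfl, ?_⟩
  rw [KG_dist_of_ne_fst (show u.1 ≠ (⟨i, ⟨0, ha i⟩⟩ : Σ l, Fin (a l)).1 from hui)]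
  exact hk

private lemma res_bigPart (hm : 2 ≤ m) (ha : ∀ i, 1 ≤ a i) {k : ℕ} (hk : 1 ≤ k)
    {i j : Fin m} (hij : i ≠ j) (huniv : ∀ l, l = i ∨ l = j) (haj : a j = 1) :
    IsKResSet (KG a) k (bigPart a i) := by
  rw [KG_res_iff hm ha hk]
  intro x y hxy
  have hkey : x ∈ bigPart a i ∨ y ∈ bigPart a i := by
    by_contra hc
    push_neg at hc
    have hx : x.1 = j := (huniv x.1).resolve_left (fun h => hc.1 (mem_bigPart.mpr h))
    have hy : y.1 = j := (huniv y.1).resolve_left (fun h => hc.2 (mem_bigPart.mpr h))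
    exact hxy (sigma_eq_of_fst_eq (hx.trans hy.symm) (hx ▸ haj))
  rcases hkey with hx | hy
  · refine ⟨x, hx, ?_⟩
    have := KG_dist_pos hm ha (Ne.symm hxy)
    rw [SimpleGraph.dist_self]
    omega
  · refine ⟨y, hy, ?_⟩
    have := KG_dist_pos hm ha hxy
    rw [SimpleGraph.dist_self (G := KG a) (v := y)]
    omega

private lemma star_ld_lower (hm : 2 ≤ m) (ha : ∀ i, 1 ≤ a i) (hn : 3 ≤ ∑ l, a l)
    {i j : Fin m} (hij : i ≠ j) (huniv : ∀ l, l = i ∨ l = j) (haj : a j = 1)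
    (hai2 : 2 ≤ a i) {S : Finset (Σ l, Fin (a l))}
    (hdom : IsKDomSet (KG a) 1 S) (hres : IsKResSet (KG a) 1 S) :
    ∑ l, a l - 1 ≤ S.card := by
  classical
  by_contra hc
  push_neg at hc
  have hN : Fintype.card (Σ l, Fin (a l)) = ∑ l, a l := by simp
  have hcompl : 1 < (Sᶜ).card := by
    rw [card_compl, hN]
    omega
  obtain ⟨x, hx, y, hy, hxy⟩ := one_lt_card.mp hcompl
  have hxS : x ∉ S := mem_compl.mp hx
  have hyS : y ∉ S := mem_compl.mp hy
  have claim : ∀ b c : Σ l, Fin (a l), b ∉ S → c ∉ S → b.1 = i → c.1 = j → False := by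
    intro b c hbS hcS hbi hcj
    obtain ⟨w, hwS, hw⟩ := hdom b hbS
    have hwb : w ≠ b := fun h => hbS (h ▸ hwS)
    have hwfst : b.1 ≠ w.1 := by
      intro h
      rw [KG_dist_of_eq_fst hm ha (Ne.symm hwb) h] at hw
      omega
    have hwj : w.1 = j := by
      rcases huniv w.1 with h | h
      · exact absurd (hbi.trans h.symm) hwfst
      · exact h
    have : w = c := sigma_eq_of_fst_eq (hwj.trans hcj.symm) (hwj ▸ haj)
    exact hcS (this ▸ hwS)
  by_cases hxi : x.1 = i <;> by_cases hyi : y.1 = i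
  · -- twins in the big part
    obtain ⟨z, hz, hne⟩ := (KG_res_iff hm ha le_rfl S).mp hres x y hxy
    have hzx : z ≠ x := fun h => hxS (h ▸ hz)
    have hzy : z ≠ y := fun h => hyS (h ▸ hz)
    have hlx : lab a x = Sum.inl i := by
      rw [lab_eq_inl (show a x.1 ≠ 1 by rw [hxi]; omega), hxi]
    have hly : lab a y = Sum.inl i := by
      rw [lab_eq_inl (show a y.1 ≠ 1 by rw [hyi]; omega), hyi]
    exact hne (twin hm ha hxy (hlx.trans hly.symm) hzx hzy)
  · exact claim x y hxS hyS hxi ((huniv y.1).resolve_left hyi)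
  · exact claim y x hyS hxS hyi ((huniv x.1).resolve_left hxi)
  · exact hxy (sigma_eq_of_fst_eq
      (((huniv x.1).resolve_left hxi).trans ((huniv y.1).resolve_left hyi).symm)
      (((huniv x.1).resolve_left hxi) ▸ haj))

open Classical in
private lemma T_star (hm : 2 ≤ m) (ha : ∀ i, 1 ≤ a i) {i j : Fin m} (hij : i ≠ j)
    (huniv : ∀ l, l = i ∨ l = j) (haj : a j = 1) (hai2 : 2 ≤ a i) :
    ((univ : Finset (Σ l, Fin (a l))).image (lab a)).card = 2 := by
  have hT : (univ : Finset (Σ l, Fin (a l))).image (lab a) = {Sum.inl i, Sum.inr ()} := by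
    ext l
    simp only [mem_image, mem_insert, mem_singleton]
    constructor
    · rintro ⟨v, -, rfl⟩
      rcases huniv v.1 with h | h
      · left
        rw [lab_eq_inl (show a v.1 ≠ 1 by rw [h]; omega), h]
      · right
        rw [lab_eq_inr (h ▸ haj)]
    · rintro (rfl | rfl)
      · exact ⟨⟨i, ⟨0, ha i⟩⟩, mem_univ _, lab_eq_inl (by simp; omega)⟩
      · exact ⟨⟨j, ⟨0, ha j⟩⟩, mem_univ _, lab_eq_inr haj⟩
  rw [hT]
  exact card_pair (by simp)

end KG6

open Classical in
/-- For the complete `m`-partite graph `G = K_{a_1,…,a_m}` (`m ≥ 2`, all `a_i ≥ 1`,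
order `n = Σ a_i ≥ 3`) and a positive integer `k`: if `k = 1` and `G` is isomorphic
to the star `K_{1,n-1}` then `γ_L^k(G) = n - 1 = dim_k(G) + 1`; otherwise
`γ_L^k(G) = dim_k(G)`. -/
theorem stmt_14 (m : ℕ) (hm : 2 ≤ m) (a : Fin m → ℕ) (ha : ∀ i, 1 ≤ a i)
    (hn : 3 ≤ ∑ i, a i) (k : ℕ) (hk : 1 ≤ k) :
    if k = 1 ∧ Nonempty ((completeMultipartiteGraph fun i => Fin (a i)) ≃g
        completeBipartiteGraph (Fin 1) (Fin (∑ i, a i - 1))) then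
      kld (completeMultipartiteGraph fun i => Fin (a i)) k = (∑ i, a i) - 1 ∧
        (∑ i, a i) - 1 = kdim (completeMultipartiteGraph fun i => Fin (a i)) k + 1
    else
      kld (completeMultipartiteGraph fun i => Fin (a i)) k =
        kdim (completeMultipartiteGraph fun i => Fin (a i)) k := by
  classical
  have hN : Fintype.card (Σ i, Fin (a i)) = ∑ i, a i := by simp
  by_cases hcond : k = 1 ∧ Nonempty ((completeMultipartiteGraph fun i => Fin (a i)) ≃g
      completeBipartiteGraph (Fin 1) (Fin (∑ i, a i - 1)))
  · rw [if_pos hcond]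
    obtain ⟨hk1, hiso⟩ := hcond
    obtain ⟨i, j, hij, huniv, haj, hai2⟩ := star_structure hm ha hn hiso
    have hsum : ∑ l, a l = a i + a j := sum_eq_pair hij huniv
    -- kld = n - 1
    have hmemld : (∑ l, a l - 1) ∈ {c : ℕ | ∃ S : Finset (Σ l, Fin (a l)),
        IsKDomSet (KG a) k S ∧ IsKResSet (KG a) k S ∧ S.card = c} := by
      refine ⟨bigPart a i, dom_bigPart hm ha hk i, res_bigPart hm ha hk hij huniv haj, ?_⟩
      rw [card_bigPart]
      omega
    have hlbld : ∀ c ∈ {c : ℕ | ∃ S : Finset (Σ l, Fin (a l)),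
        IsKDomSet (KG a) k S ∧ IsKResSet (KG a) k S ∧ S.card = c}, ∑ l, a l - 1 ≤ c := by
      rintro c ⟨S, hdom, hres, rfl⟩
      subst hk1
      exact star_ld_lower hm ha hn hij huniv haj hai2 hdom hres
    have hkld : kld (KG a) k = ∑ l, a l - 1 :=
      le_antisymm (Nat.sInf_le hmemld) (le_csInf ⟨_, hmemld⟩ hlbld)
    -- kdim = n - 2
    have hcardE0c : ((E0 a hm ha)ᶜ).card = ∑ l, a l - 2 := by
      rw [card_compl, hN, card_E0 hm ha, T_star hm ha hij huniv haj hai2]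
    have hmemdim : (∑ l, a l - 2) ∈ {c : ℕ | ∃ R : Finset (Σ l, Fin (a l)),
        IsKResSet (KG a) k R ∧ R.card = c} :=
      ⟨(E0 a hm ha)ᶜ, res_E0c hm ha hk, hcardE0c⟩
    have hlbdim : ∀ c ∈ {c : ℕ | ∃ R : Finset (Σ l, Fin (a l)),
        IsKResSet (KG a) k R ∧ R.card = c}, ∑ l, a l - 2 ≤ c := by
      rintro c ⟨R, hR, rfl⟩
      have := res_lower hm ha hk hR
      rwa [hN, T_star hm ha hij huniv haj hai2] at this
    have hkdim : kdim (KG a) k = ∑ l, a l - 2 :=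
      le_antisymm (Nat.sInf_le hmemdim) (le_csInf ⟨_, hmemdim⟩ hlbdim)
    refine ⟨hkld, ?_⟩
    rw [show kdim (completeMultipartiteGraph fun i => Fin (a i)) k = ∑ l, a l - 2 from hkdim]
    omega
  · rw [if_neg hcond]
    have hdom : IsKDomSet (KG a) k ((E0 a hm ha)ᶜ) := by
      rcases Nat.lt_or_ge k 2 with h2 | h2
      · have hk1 : k = 1 := by omega
        subst hk1
        apply dom_E0c_one hm ha
        intro i j hij huniv haj
        exact hcond ⟨rfl, star_iso hm ha hij huniv haj⟩
      · exact dom_E0c_two hm ha h2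
    have hres : IsKResSet (KG a) k ((E0 a hm ha)ᶜ) := res_E0c hm ha hk
    have hmemB : ((E0 a hm ha)ᶜ).card ∈ {c : ℕ | ∃ S : Finset (Σ l, Fin (a l)),
        IsKDomSet (KG a) k S ∧ IsKResSet (KG a) k S ∧ S.card = c} :=
      ⟨(E0 a hm ha)ᶜ, hdom, hres, rfl⟩
    have hBA : {c : ℕ | ∃ S : Finset (Σ l, Fin (a l)),
        IsKDomSet (KG a) k S ∧ IsKResSet (KG a) k S ∧ S.card = c} ⊆
        {c : ℕ | ∃ R : Finset (Σ l, Fin (a l)), IsKResSet (KG a) k R ∧ R.card = c} := by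
      rintro c ⟨S, -, hres', hcard⟩
      exact ⟨S, hres', hcard⟩
    have h1 : kdim (KG a) k ≤ kld (KG a) k :=
      Nat.sInf_le (hBA (Nat.sInf_mem ⟨_, hmemB⟩))
    have h2 : kld (KG a) k ≤ ((E0 a hm ha)ᶜ).card := Nat.sInf_le hmemB
    have h3 : ((E0 a hm ha)ᶜ).card ≤ kdim (KG a) k := by
      have hcard : ((E0 a hm ha)ᶜ).card =
          Fintype.card (Σ l, Fin (a l)) - ((univ : Finset (Σ l, Fin (a l))).image (lab a)).card := by
        rw [card_compl, card_E0 hm ha]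
      rw [hcard]
      refine le_csInf ⟨_, hBA hmemB⟩ ?_
      rintro c ⟨R, hR, rfl⟩
      exact res_lower hm ha hk hR
    exact le_antisymm (le_trans h2 h3) h1
end

section
/- Let n ≥ 2 and let k be a positive integer, and let P_n denote the path on n vertices. If n ≡ 1 (mod 3k+2) or n ≡ k+2 (mod 3k+2), then γ_L^k(P_n) = dim_k(P_n) + 1; otherwise γ_L^k(P_n) = dim_k(P_n). -/
open SimpleGraph Finset

lemma pg_walk_len {n : ℕ} {u v : Fin n} (w : (pathGraph n).Walk u v) :
    Nat.dist u.val v.val ≤ w.length := by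
  induction w with
  | nil => simp [Nat.dist_self]
  | @cons a b c hadj p ih =>
    rw [pathGraph_adj] at hadj
    have h1 : Nat.dist a.val b.val ≤ 1 := by
      rcases hadj with h|h <;> simp [Nat.dist] <;> omega
    have := Nat.dist.triangle_inequality a.val b.val c.val
    simp only [SimpleGraph.Walk.length_cons]
    omega

lemma pg_dist_le {n : ℕ} (u v : Fin n) (h : u.val ≤ v.val) :
    (pathGraph n).dist u v ≤ v.val - u.val := by
  obtain ⟨d, hd⟩ := Nat.le.dest h
  induction d generalizing v with
  | zero => have : u = v := Fin.ext (by omega); simp [this]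
  | succ d ih =>
    have hwn : (u.val + d) < n := by have := v.isLt; omega
    set w : Fin n := ⟨u.val + d, hwn⟩ with hw
    have hadj : (pathGraph n).Adj w v := by
      rw [pathGraph_adj]; left; simp [hw]; omega
    have h1 : (pathGraph n).dist u w ≤ d := by
      have := ih w (by simp [hw]) (by simp [hw])
      simpa [hw] using this
    have h2 : (pathGraph n).dist w v = 1 := dist_eq_one_iff_adj.2 hadj
    have hconn : (pathGraph n).Connected := by
      have : n = (n - 1) + 1 := by have := v.pos; omega
      rw [this]; exact pathGraph_connected _
    have := hconn.dist_triangle (u := u) (v := w) (w := v)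
    omega

lemma pg_dist {n : ℕ} (u v : Fin n) :
    (pathGraph n).dist u v = Nat.dist u.val v.val := by
  rcases le_total u.val v.val with h|h
  · apply le_antisymm
    · rw [Nat.dist_eq_sub_of_le h]; exact pg_dist_le u v h
    · have hconn : (pathGraph n).Connected := by
        have : n = (n - 1) + 1 := by have := v.pos; omega
        rw [this]; exact pathGraph_connected _
      obtain ⟨w, hw⟩ := (hconn.preconnected u v).exists_walk_length_eq_dist
      rw [← hw]; exact pg_walk_len w
  · rw [Nat.dist_comm, dist_comm]
    apply le_antisymm
    · rw [Nat.dist_eq_sub_of_le h]; exact pg_dist_le v u h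
    · have hconn : (pathGraph n).Connected := by
        have : n = (n - 1) + 1 := by have := v.pos; omega
        rw [this]; exact pathGraph_connected _
      obtain ⟨w, hw⟩ := (hconn.preconnected v u).exists_walk_length_eq_dist
      rw [← hw]; exact pg_walk_len w


def ResN (n k : ℕ) (R : Finset ℕ) : Prop :=
  ∀ x, x < n → ∀ y, y < n → x ≠ y →
    ∃ z ∈ R, min (Nat.dist x z) (k+1) ≠ min (Nat.dist y z) (k+1)
def DomN (n k : ℕ) (R : Finset ℕ) : Prop :=
  ∀ x, x < n → ∃ z ∈ R, Nat.dist x z ≤ k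

lemma res_set_eq (n k : ℕ) :
    {m : ℕ | ∃ R : Finset (Fin n), IsKResSet (pathGraph n) k R ∧ R.card = m}
      = {m : ℕ | ∃ R : Finset ℕ, R ⊆ range n ∧ ResN n k R ∧ R.card = m} := by
  ext m
  constructor
  · rintro ⟨R, hR, rfl⟩
    refine ⟨R.image Fin.val, ?_, ?_, (Finset.card_image_of_injective _ Fin.val_injective).symm ▸ rfl⟩
    · intro x hx
      obtain ⟨u, hu, rfl⟩ := Finset.mem_image.1 hx
      exact mem_range.2 u.isLt
    · intro x hx y hy hxy
      obtain ⟨z, hz, hne⟩ := hR ⟨x, hx⟩ ⟨y, hy⟩ (by simp [Fin.ext_iff]; exact hxy)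
      refine ⟨z.val, Finset.mem_image_of_mem _ hz, ?_⟩
      simpa [pg_dist] using hne
  · rintro ⟨R, hsub, hR, rfl⟩
    refine ⟨R.attachFin (fun m hm => mem_range.1 (hsub hm)), ?_, Finset.card_attachFin _ _⟩
    intro x y hxy
    obtain ⟨z, hz, hne⟩ := hR x.val x.isLt y.val y.isLt (by simpa [Fin.ext_iff] using hxy)
    refine ⟨⟨z, mem_range.1 (hsub hz)⟩, (Finset.mem_attachFin _).2 hz, ?_⟩
    simpa [pg_dist] using hne

lemma ld_set_eq (n k : ℕ) :
    {m : ℕ | ∃ S : Finset (Fin n), IsKDomSet (pathGraph n) k S ∧ IsKResSet (pathGraph n) k S ∧ S.card = m}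
      = {m : ℕ | ∃ R : Finset ℕ, R ⊆ range n ∧ DomN n k R ∧ ResN n k R ∧ R.card = m} := by
  ext m
  constructor
  · rintro ⟨R, hD, hR, rfl⟩
    refine ⟨R.image Fin.val, ?_, ?_, ?_, (Finset.card_image_of_injective _ Fin.val_injective).symm ▸ rfl⟩
    · intro x hx
      obtain ⟨u, hu, rfl⟩ := Finset.mem_image.1 hx
      exact mem_range.2 u.isLt
    · intro x hx
      by_cases hmem : (⟨x, hx⟩ : Fin n) ∈ R
      · exact ⟨x, Finset.mem_image_of_mem _ hmem, by simp [Nat.dist_self]⟩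
      · obtain ⟨w, hw, hd⟩ := hD ⟨x, hx⟩ hmem
        exact ⟨w.val, Finset.mem_image_of_mem _ hw, by rw [pg_dist] at hd; exact hd⟩
    · intro x hx y hy hxy
      obtain ⟨z, hz, hne⟩ := hR ⟨x, hx⟩ ⟨y, hy⟩ (by simp [Fin.ext_iff]; exact hxy)
      refine ⟨z.val, Finset.mem_image_of_mem _ hz, ?_⟩
      simpa [pg_dist] using hne
  · rintro ⟨R, hsub, hD, hR, rfl⟩
    refine ⟨R.attachFin (fun m hm => mem_range.1 (hsub hm)), ?_, ?_, Finset.card_attachFin _ _⟩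
    · intro u _
      obtain ⟨z, hz, hd⟩ := hD u.val u.isLt
      exact ⟨⟨z, mem_range.1 (hsub hz)⟩, (Finset.mem_attachFin _).2 hz, by rw [pg_dist]; exact hd⟩
    · intro x y hxy
      obtain ⟨z, hz, hne⟩ := hR x.val x.isLt y.val y.isLt (by simpa [Fin.ext_iff] using hxy)
      refine ⟨⟨z, mem_range.1 (hsub hz)⟩, (Finset.mem_attachFin _).2 hz, ?_⟩
      simpa [pg_dist] using hne


/-- max number of vertices resolvable with m landmarks -/
def Nv (k m : ℕ) : ℕ := if m % 2 = 0 then (m/2) * (3*k+2) + 1 else (m/2) * (3*k+2) + (k+2)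
def Fv (k m : ℕ) : ℕ := if m % 2 = 0 then (m/2) * (3*k+2) else (m/2) * (3*k+2) + (k+1)
def Av (k m : ℕ) : ℕ := if m % 2 = 0 then (m/2 - 1) * (3*k+2) + (2*k+2) else (m/2) * (3*k+2) + (k+1)

lemma Nv_even (k j : ℕ) : Nv k (2*j) = j*(3*k+2) + 1 := by
  have h1 : (2*j) % 2 = 0 := by omega
  have h2 : (2*j) / 2 = j := by omega
  simp [Nv, h1, h2]
lemma Nv_odd (k j : ℕ) : Nv k (2*j+1) = j*(3*k+2) + (k+2) := by
  have h1 : (2*j+1) % 2 = 1 := by omega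
  have h2 : (2*j+1) / 2 = j := by omega
  simp [Nv, h1, h2]
lemma Fv_even (k j : ℕ) : Fv k (2*j) = j*(3*k+2) := by
  have h1 : (2*j) % 2 = 0 := by omega
  have h2 : (2*j) / 2 = j := by omega
  simp [Fv, h1, h2]
lemma Fv_odd (k j : ℕ) : Fv k (2*j+1) = j*(3*k+2) + (k+1) := by
  have h1 : (2*j+1) % 2 = 1 := by omega
  have h2 : (2*j+1) / 2 = j := by omega
  simp [Fv, h1, h2]
lemma Av_even (k j : ℕ) : Av k (2*(j+1)) = j*(3*k+2) + (2*k+2) := by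
  have h1 : (2*(j+1)) % 2 = 0 := by omega
  have h2 : (2*(j+1)) / 2 - 1 = j := by omega
  simp [Av, h1, h2]
lemma Av_odd (k j : ℕ) : Av k (2*j+1) = j*(3*k+2) + (k+1) := by
  have h1 : (2*j+1) % 2 = 1 := by omega
  have h2 : (2*j+1) / 2 = j := by omega
  simp [Av, h1, h2]

lemma Nv_zero (k : ℕ) : Nv k 0 = 1 := by simp [Nv]
lemma Nv_eq_Fv (k m : ℕ) : Nv k m = Fv k m + 1 := by
  unfold Nv Fv; split <;> omega

lemma Nv_succ_lt (k m : ℕ) : Nv k m < Nv k (m+1) := by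
  obtain ⟨j, rfl | rfl⟩ := Nat.even_or_odd' m
  · rw [Nv_even, Nv_odd]; omega
  · have : 2*j+1+1 = 2*(j+1) := by omega
    rw [this, Nv_odd, Nv_even, add_one_mul]; omega

lemma Nv_strictMono (k : ℕ) : StrictMono (Nv k) :=
  strictMono_nat_of_lt_succ (fun m => Nv_succ_lt k m)

lemma Av_one (k : ℕ) : Av k 1 = k + 1 := by have := Av_odd k 0; simpa using this
lemma Av_two (k : ℕ) : Av k 2 = 2*k + 2 := by have := Av_even k 0; simpa using this

lemma Av_step1 (k m : ℕ) (hm : 1 ≤ m) : (k+1) + Av k m ≤ Av k (m+1) := by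
  obtain ⟨j, rfl | rfl⟩ := Nat.even_or_odd' m
  · obtain ⟨j', rfl⟩ : ∃ j', j = j' + 1 := ⟨j - 1, by omega⟩
    rw [Av_even, show 2*(j'+1)+1 = 2*(j'+1)+1 from rfl, Av_odd, add_one_mul]
    omega
  · rw [Av_odd, show 2*j+1+1 = 2*(j+1) from by omega, Av_even]
    omega

lemma Av_step2 (k m : ℕ) (hm : 1 ≤ m) : (3*k+2) + Av k m = Av k (m+2) := by
  obtain ⟨j, rfl | rfl⟩ := Nat.even_or_odd' m
  · obtain ⟨j', rfl⟩ : ∃ j', j = j' + 1 := ⟨j - 1, by omega⟩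
    rw [Av_even, show 2*(j'+1)+2 = 2*(j'+1+1) from by omega, Av_even, add_one_mul]
    omega
  · rw [Av_odd, show 2*j+1+2 = 2*(j+1)+1 from by omega, Av_odd, add_one_mul]
    omega

lemma Av_le_Fv (k m : ℕ) (hm : 1 ≤ m) : Av k m ≤ Fv k m := by
  obtain ⟨j, rfl | rfl⟩ := Nat.even_or_odd' m
  · obtain ⟨j', rfl⟩ : ∃ j', j = j' + 1 := ⟨j - 1, by omega⟩
    rw [Av_even, Fv_even, add_one_mul]; omega
  · rw [Av_odd, Fv_odd]

lemma Fv_eq_Av (k m : ℕ) (hm : 1 ≤ m) : Fv k (m+1) = 2*k+1 + Av k m := by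
  obtain ⟨j, rfl | rfl⟩ := Nat.even_or_odd' m
  · obtain ⟨j', rfl⟩ : ∃ j', j = j' + 1 := ⟨j - 1, by omega⟩
    rw [Av_even, show 2*(j'+1)+1 = 2*(j'+1)+1 from rfl, Fv_odd, add_one_mul]; omega
  · rw [Av_odd, show 2*j+1+1 = 2*(j+1) from by omega, Fv_even, add_one_mul]; omega

lemma Nv_one (k : ℕ) : Nv k 1 = k + 2 := by have := Nv_odd k 0; simpa using this
lemma Nv_two (k : ℕ) : Nv k 2 = 3*k + 3 := by have := Nv_even k 1; simpa using this; 


def BlindN (n k : ℕ) (R : Finset ℕ) (v : ℕ) : Prop :=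
  v < n ∧ ∀ z ∈ R, k+1 ≤ Nat.dist v z
def SymN (n k : ℕ) (R : Finset ℕ) : Prop :=
  ∀ b ∈ R, ∀ t, 1 ≤ t → t ≤ b → b + t < n →
    ∃ z ∈ R, z ≠ b ∧ Nat.dist (Nat.dist b z) t ≤ k

lemma resolve_pair {n k : ℕ} {R : Finset ℕ} (hsym : SymN n k R)
    (x y : ℕ) (hx : x < n) (hy : y < n) (hxy : x ≠ y)
    (hnb : ∃ z ∈ R, Nat.dist x z ≤ k) :
    ∃ z ∈ R, min (Nat.dist x z) (k+1) ≠ min (Nat.dist y z) (k+1) := by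
  obtain ⟨z, hzR, hzk⟩ := hnb
  by_cases h : min (Nat.dist x z) (k+1) = min (Nat.dist y z) (k+1)
  · -- same truncated distance t := dist x z to z; x,y symmetric about z
    have hyz : Nat.dist y z = Nat.dist x z := by omega
    have ht1 : 1 ≤ Nat.dist x z := by
      rcases Nat.eq_zero_or_pos (Nat.dist x z) with h0 | h1
      · exfalso
        have hx0 : x = z := by simp only [Nat.dist] at h0; omega
        have hy0 : y = z := by rw [h0] at hyz; simp only [Nat.dist] at hyz; omega
        exact hxy (hx0.trans hy0.symm)
      · exact h1
    have hcases : (x + Nat.dist x z = z ∧ y = z + Nat.dist x z) ∨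
        (y + Nat.dist x z = z ∧ x = z + Nat.dist x z) := by
      simp only [Nat.dist] at hyz ⊢
      omega
    have hrange : z + Nat.dist x z < n := by
      rcases hcases with ⟨_, hy2⟩ | ⟨_, hx2⟩ <;> omega
    have htz : Nat.dist x z ≤ z := by
      rcases hcases with ⟨h3, _⟩ | ⟨h3, _⟩ <;> omega
    obtain ⟨w, hwR, hwz, hwd⟩ := hsym z hzR (Nat.dist x z) ht1 htz hrange
    refine ⟨w, hwR, ?_⟩
    have hd1 : 1 ≤ Nat.dist z w := Nat.dist_pos_of_ne (fun hh => hwz hh.symm)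
    rcases hcases with ⟨hx2, hy2⟩ | ⟨hy2, hx2⟩ <;>
      (simp only [Nat.dist] at hwd hd1 hx2 hy2 ⊢; omega)
  · exact ⟨z, hzR, h⟩

lemma resN_of_blind_sym {n k : ℕ} {R : Finset ℕ}
    (hblind : ∀ v w, BlindN n k R v → BlindN n k R w → v = w)
    (hsym : SymN n k R) : ResN n k R := by
  intro x hx y hy hxy
  by_cases hbx : BlindN n k R x
  · by_cases hby : BlindN n k R y
    · exact absurd (hblind x y hbx hby) hxy
    · have hnb : ∃ z ∈ R, Nat.dist y z ≤ k := by
        by_contra hc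
        push_neg at hc
        exact hby ⟨hy, fun z hz => hc z hz⟩
      obtain ⟨z, hzR, hne⟩ := resolve_pair hsym y x hy hx (Ne.symm hxy) hnb
      exact ⟨z, hzR, Ne.symm hne⟩
  · have hnb : ∃ z ∈ R, Nat.dist x z ≤ k := by
      by_contra hc
      push_neg at hc
      exact hbx ⟨hx, fun z hz => hc z hz⟩
    exact resolve_pair hsym x y hx hy hxy hnb

/-- invariant for the constructions -/
def ConX (n k : ℕ) (R : Finset ℕ) : Prop :=
  R ⊆ range n ∧ (∀ v, BlindN n k R v → v = n - 1) ∧ SymN n k R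

lemma resN_of_con {n k : ℕ} {R : Finset ℕ} (h : ConX n k R) : ResN n k R :=
  resN_of_blind_sym
    (fun v w hv hw => by rw [h.2.1 v hv, h.2.1 w hw]) h.2.2

lemma mem_shift {p a : ℕ} {R : Finset ℕ} : a ∈ R.image (p + ·) ↔ ∃ r ∈ R, a = p + r := by
  simp [Finset.mem_image, eq_comm]

lemma con_glue (k n : ℕ) (hk : 1 ≤ k) (hn : 1 ≤ n) (R : Finset ℕ) (h : ConX n k R) :
    ConX (n + (3*k+2)) k (insert k (insert (2*k+1) (R.image ((3*k+2) + ·)))) ∧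
    (insert k (insert (2*k+1) (R.image ((3*k+2) + ·)))).card = R.card + 2 ∧
    (DomN n k R → DomN (n + (3*k+2)) k (insert k (insert (2*k+1) (R.image ((3*k+2) + ·))))) := by
  obtain ⟨hsub, hblind, hsym⟩ := h
  set p := 3*k+2 with hp
  set S := insert k (insert (2*k+1) (R.image (p + ·))) with hS
  have hmemS : ∀ a, a ∈ S ↔ a = k ∨ a = 2*k+1 ∨ ∃ r ∈ R, p + r = a := by
    intro a; simp [hS, Finset.mem_insert]
  have hRlt : ∀ r ∈ R, r < n := fun r hr => mem_range.1 (hsub hr)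
  refine ⟨⟨?_, ?_, ?_⟩, ?_, ?_⟩
  · -- subset
    intro a ha
    rw [hmemS] at ha
    rcases ha with rfl | rfl | ⟨r, hr, rfl⟩ <;> rw [mem_range]
    · omega
    · omega
    · have := hRlt r hr; omega
  · -- blind
    rintro v ⟨hv, hbl⟩
    have hvp : p ≤ v := by
      by_contra hc
      push_neg at hc
      rcases Nat.lt_or_ge v (2*k+1) with hvk | hvk
      · have := hbl k (by rw [hmemS]; left; rfl)
        simp only [Nat.dist] at this; omega
      · have := hbl (2*k+1) (by rw [hmemS]; right; left; rfl)
        simp only [Nat.dist] at this; omega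
    have hold : BlindN n k R (v - p) := by
      refine ⟨by omega, fun z hz => ?_⟩
      have := hbl (p + z) (by rw [hmemS]; right; right; exact ⟨z, hz, rfl⟩)
      simp only [Nat.dist] at this ⊢; omega
    have := hblind _ hold
    omega
  · -- sym
    intro b hb t ht1 htb hbt
    rw [hmemS] at hb
    rcases hb with hb1 | hb1 | ⟨r, hr, hb1⟩
    · refine ⟨2*k+1, by rw [hmemS]; right; left; rfl, by omega, ?_⟩
      simp only [Nat.dist]; omega
    · refine ⟨k, by rw [hmemS]; left; rfl, by omega, ?_⟩
      simp only [Nat.dist]; omega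
    · rcases le_or_gt t r with htr | htr
      · have hrn : r + t < n := by have := hRlt r hr; omega
        obtain ⟨z, hz, hzb, hzd⟩ := hsym r hr t ht1 htr hrn
        refine ⟨p + z, by rw [hmemS]; right; right; exact ⟨z, hz, rfl⟩, by omega, ?_⟩
        simp only [Nat.dist] at hzd ⊢; omega
      · rcases le_or_gt t (r + 2*k+1) with hc | hc
        · refine ⟨2*k+1, by rw [hmemS]; right; left; rfl, by omega, ?_⟩
          simp only [Nat.dist]; omega
        · refine ⟨k, by rw [hmemS]; left; rfl, by omega, ?_⟩
          simp only [Nat.dist]; omega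
  · -- card
    have h1 : k ∉ insert (2*k+1) (R.image (p + ·)) := by
      simp only [Finset.mem_insert, mem_shift]
      push_neg
      refine ⟨by omega, fun r hr => by omega⟩
    have h2 : (2*k+1) ∉ R.image (p + ·) := by
      rw [mem_shift]; push_neg; intro r hr; omega
    rw [hS, Finset.card_insert_of_notMem h1, Finset.card_insert_of_notMem h2,
      Finset.card_image_of_injective _ (fun a b hab => by omega)]
  · -- dom
    intro hdom x hx
    rcases Nat.lt_or_ge x p with hxp | hxp
    · rcases Nat.lt_or_ge x (2*k+1) with hxk | hxk
      · exact ⟨k, by rw [hmemS]; left; rfl, by simp only [Nat.dist]; omega⟩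
      · exact ⟨2*k+1, by rw [hmemS]; right; left; rfl, by simp only [Nat.dist]; omega⟩
    · obtain ⟨z, hz, hzd⟩ := hdom (x - p) (by omega)
      refine ⟨p + z, by rw [hmemS]; right; right; exact ⟨z, hz, rfl⟩, ?_⟩
      simp only [Nat.dist] at hzd ⊢; omega


lemma Nv_step2 (k m : ℕ) : Nv k (m+2) = Nv k m + (3*k+2) := by
  obtain ⟨j, rfl | rfl⟩ := Nat.even_or_odd' m
  · rw [show 2*j+2 = 2*(j+1) from by omega, Nv_even, Nv_even, add_one_mul]; omega
  · rw [show 2*j+1+2 = 2*(j+1)+1 from by omega, Nv_odd, Nv_odd, add_one_mul]; omega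

lemma con_exists (k : ℕ) (hk : 1 ≤ k) :
    ∀ m n, 1 ≤ n → n ≤ Nv k m →
    ∃ R : Finset ℕ, ConX n k R ∧ R.card ≤ m ∧ (n + 1 ≤ Nv k m → DomN n k R) := by
  intro m
  induction m using Nat.strong_induction_on with
  | _ m ih =>
  intro n hn hnN
  rcases m with _ | m1
  · rw [Nv_zero] at hnN
    refine ⟨∅, ⟨by simp, ?_, ?_⟩, by simp, fun hc => by rw [Nv_zero] at hc; omega⟩
    · rintro v ⟨hv, -⟩; omega
    · intro b hb; simp at hb
  rcases m1 with _ | m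
  · rw [show Nv k (0+1) = k + 2 from Nv_one k] at hnN
    refine ⟨{0}, ⟨?_, ?_, ?_⟩, by simp, ?_⟩
    · intro a ha; simp at ha; simp [ha]; omega
    · rintro v ⟨hv, hbl⟩
      have := hbl 0 (by simp)
      simp only [Nat.dist] at this; omega
    · intro b hb t ht1 htb hbt
      simp at hb; omega
    · intro hle x hx
      rw [show Nv k (0+1) = k + 2 from Nv_one k] at hle
      exact ⟨0, by simp, by simp only [Nat.dist]; omega⟩
  · by_cases hsmall : n + 1 ≤ Nv k (m+1)
    · obtain ⟨R, hcon, hcard, hdom⟩ := ih (m+1) (by omega) n hn (by omega)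
      exact ⟨R, hcon, by omega, fun _ => hdom hsmall⟩
    · push_neg at hsmall
      have hlow : Nv k (m+1) ≤ n := by omega
      rcases m with _ | m'
      · -- base: two landmarks, k+2 ≤ n ≤ 3k+3
        have eA : Nv k (0+1) = k+2 := Nv_one k
        have eB : Nv k (0+1+1) = 3*k+3 := Nv_two k
        have hlow' : k + 2 ≤ n := by omega
        have hnN' : n ≤ 3*k+3 := by omega
        clear hlow hnN hsmall
        have hlow := hlow'; have hnN := hnN'
        set b := min (2*k+1) (n-1) with hb
        have hkb : k < b := by omega
        have hbn : b ≤ n - 1 := by omega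
        refine ⟨insert k {b}, ⟨?_, ?_, ?_⟩, ?_, ?_⟩
        · intro a ha
          simp only [Finset.mem_insert, Finset.mem_singleton] at ha
          rcases ha with rfl | rfl <;> rw [Finset.mem_range] <;> omega
        · rintro v ⟨hv, hbl⟩
          have h1 := hbl k (by simp)
          have h2 := hbl b (by simp)
          simp only [Nat.dist] at h1 h2; omega
        · intro c hc t ht1 htc hct
          simp only [Finset.mem_insert, Finset.mem_singleton] at hc
          rcases hc with rfl | rfl
          · refine ⟨b, by simp, by omega, ?_⟩
            simp only [Nat.dist]; omega
          · refine ⟨k, by simp, by omega, ?_⟩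
            simp only [Nat.dist]; omega
        · rw [Finset.card_insert_of_notMem (by simp; omega), Finset.card_singleton]
        · intro hle x hx
          rw [Nv_two] at hle
          rcases le_or_gt x (2*k) with hxk | hxk
          · exact ⟨k, by simp, by simp only [Nat.dist]; omega⟩
          · exact ⟨b, by simp, by simp only [Nat.dist]; omega⟩
      · -- glue case : n ≥ Nv k (m'+2) ≥ Nv k 2 = 3k+3
        have h2 : Nv k 2 ≤ Nv k (m'+2) := (Nv_strictMono k).monotone (by omega)
        rw [Nv_two] at h2
        have hE0 := Nv_step2 k (m'+1)
        have hE1 : Nv k (m'+1+1) = Nv k (m'+2) := rfl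
        have hE2 : Nv k (m'+1+2) = Nv k (m'+3) := rfl
        have hE3 : Nv k (m'+2+1) = Nv k (m'+3) := rfl
        have hE4 : Nv k (m'+1+1+1) = Nv k (m'+3) := rfl
        have hn' : 1 ≤ n - (3*k+2) := by omega
        have hn'N : n - (3*k+2) ≤ Nv k (m'+1) := by omega
        obtain ⟨R, hcon, hcard, hdom⟩ := ih (m'+1) (by omega) (n - (3*k+2)) hn' hn'N
        obtain ⟨hcon', hcard', hdom'⟩ := con_glue k (n - (3*k+2)) hk hn' R hcon
        rw [show n - (3*k+2) + (3*k+2) = n from by omega] at hcon' hdom'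
        refine ⟨_, hcon', by omega, fun hle => hdom' (hdom (by omega))⟩


section Lower

open Classical in
noncomputable def blx (n k : ℕ) (R : Finset ℕ) (b : ℕ) : ℕ :=
  if ∃ v, b < v ∧ BlindN n k R v then 1 else 0

lemma blx_le_one (n k : ℕ) (R : Finset ℕ) (b : ℕ) : blx n k R b ≤ 1 := by
  unfold blx; split <;> omega

lemma blx_mono (n k : ℕ) (R : Finset ℕ) {b c : ℕ} (h : b ≤ c) :
    blx n k R c ≤ blx n k R b := by
  unfold blx
  split
  · rename_i hex
    obtain ⟨v, hv1, hv2⟩ := hex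
    rw [if_pos ⟨v, by omega, hv2⟩]
  · split <;> omega

lemma blx_pos (n k : ℕ) (R : Finset ℕ) {b v : ℕ} (h1 : b < v) (h2 : BlindN n k R v) :
    blx n k R b = 1 := by
  unfold blx; rw [if_pos ⟨v, h1, h2⟩]

lemma blx_spec (n k : ℕ) (R : Finset ℕ) {b : ℕ} (h : blx n k R b ≠ 0) :
    ∃ v, b < v ∧ BlindN n k R v := by
  by_contra hc
  unfold blx at h
  rw [if_neg hc] at h
  exact h rfl

lemma blx_zero_of_noblind (n k : ℕ) (R : Finset ℕ)
    (h : ∀ v, ¬ BlindN n k R v) (b : ℕ) : blx n k R b = 0 := by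
  unfold blx
  rw [if_neg]
  rintro ⟨v, -, hv⟩
  exact h v hv

lemma blind_unique {n k : ℕ} {R : Finset ℕ} (hres : ResN n k R) :
    ∀ v w, BlindN n k R v → BlindN n k R w → v = w := by
  rintro v w ⟨hv, hbv⟩ ⟨hw, hbw⟩
  by_contra hne
  obtain ⟨z, hz, hzd⟩ := hres v hv w hw hne
  have h1 := hbv z hz
  have h2 := hbw z hz
  omega

lemma sym_nec {n k : ℕ} {R : Finset ℕ} (hres : ResN n k R)
    {b : ℕ} (hb : b ∈ R) {t : ℕ} (ht1 : 1 ≤ t) (htb : t ≤ b) (hbt : b + t < n)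
    (hbad : ∀ z ∈ R, z ≠ b → k+1 ≤ Nat.dist (Nat.dist b z) t) : False := by
  have hxy : b - t ≠ b + t := by omega
  obtain ⟨z, hz, hzd⟩ := hres (b - t) (by omega) (b + t) hbt hxy
  by_cases hzb : z = b
  · subst hzb
    apply hzd
    simp only [Nat.dist]
    omega
  · have := hbad z hz hzb
    apply hzd
    simp only [Nat.dist] at this ⊢
    omega

end Lower


lemma aux_pos {n k : ℕ} {R : Finset ℕ} (hsub : R ⊆ Finset.range n) (hres : ResN n k R) :
    ∀ (L : ℕ) (t : List ℕ) (b : ℕ), t.length = L → b ∈ R →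
    List.Pairwise (· < ·) (b :: t) → (∀ z ∈ R, z ≤ b ∨ z ∈ t) → (∀ z ∈ t, z ∈ R) →
    n ≤ b + Av k (t.length + 1) + blx n k R b := by
  intro L
  induction L using Nat.strong_induction_on with
  | _ L ih =>
  intro t b hlen hbR hsort hcomp hsubt
  have hbn : b < n := Finset.mem_range.1 (hsub hbR)
  cases t with
  | nil =>
    simp only [List.length_nil, Nat.zero_add, Av_one]
    have hub : ∀ z ∈ R, z ≤ b := by
      intro z hz
      rcases hcomp z hz with h | h
      · exact h
      · simp at h
    by_cases hsm : n ≤ b + (k+1)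
    · omega
    · push_neg at hsm
      have hbv : BlindN n k R (b+k+1) := by
        refine ⟨by omega, fun z hz => ?_⟩
        have := hub z hz
        simp only [Nat.dist]; omega
      have hn2 : n ≤ b + k + 2 := by
        by_contra hc
        push_neg at hc
        have hbw : BlindN n k R (b+k+2) := by
          refine ⟨by omega, fun z hz => ?_⟩
          have := hub z hz
          simp only [Nat.dist]; omega
        have := blind_unique hres _ _ hbv hbw
        omega
      have := blx_pos n k R (show b < b+k+1 by omega) hbv
      omega
  | cons c t' =>
    have hbc : b < c := List.rel_of_pairwise_cons hsort List.mem_cons_self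
    have hcR : c ∈ R := hsubt c List.mem_cons_self
    have hcn : c < n := Finset.mem_range.1 (hsub hcR)
    have htail : List.Pairwise (· < ·) (c :: t') := hsort.of_cons
    have hgt : ∀ z ∈ t', c < z := fun _ hz => List.rel_of_pairwise_cons htail hz
    have hcompc : ∀ z ∈ R, z ≤ c ∨ z ∈ t' := by
      intro z hz
      rcases hcomp z hz with h | h
      · left; omega
      · rcases List.mem_cons.1 h with rfl | h2
        · left; rfl
        · right; exact h2
    have hsubt' : ∀ z ∈ t', z ∈ R := fun z hz => hsubt z (List.mem_cons_of_mem _ hz)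
    rcases le_or_gt (c - b) (k+1) with hsm | hbig
    · -- small first gap
      have haux := ih t'.length (by rw [← hlen]; simp [List.length_cons]) t' c rfl hcR htail hcompc hsubt'
      have hstep := Av_step1 k (t'.length + 1) (by omega)
      have hmono := blx_mono n k R hbc.le
      simp only [List.length_cons]
      omega
    · -- big first gap: k+2 ≤ c - b
      have hgap : c - b ≤ 2*k + 2 := by
        by_contra hc
        push_neg at hc
        have hv : BlindN n k R (b+k+1) := by
          refine ⟨by omega, fun z hz => ?_⟩
          rcases hcompc z hz with h | h
          · have : z ≤ b ∨ z = c := by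
              rcases hcomp z hz with h2 | h2
              · left; exact h2
              · rcases List.mem_cons.1 h2 with rfl | h3
                · right; rfl
                · exact absurd (hgt z h3) (by omega)
            simp only [Nat.dist]; omega
          · have := hgt z h
            simp only [Nat.dist]; omega
        have hw : BlindN n k R (b+k+2) := by
          refine ⟨by omega, fun z hz => ?_⟩
          rcases hcompc z hz with h | h
          · have : z ≤ b ∨ z = c := by
              rcases hcomp z hz with h2 | h2
              · left; exact h2
              · rcases List.mem_cons.1 h2 with rfl | h3
                · right; rfl
                · exact absurd (hgt z h3) (by omega)
            simp only [Nat.dist]; omega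
          · have := hgt z h
            simp only [Nat.dist]; omega
        have := blind_unique hres _ _ hv hw
        omega
      have hblgap : c - b = 2*k+2 → BlindN n k R (b+k+1) := by
        intro hcb
        refine ⟨by omega, fun z hz => ?_⟩
        rcases hcompc z hz with h | h
        · have : z ≤ b ∨ z = c := by
            rcases hcomp z hz with h2 | h2
            · left; exact h2
            · rcases List.mem_cons.1 h2 with rfl | h3
              · right; rfl
              · exact absurd (hgt z h3) (by omega)
          simp only [Nat.dist]; omega
        · have := hgt z h
          simp only [Nat.dist]; omega
      cases t' with
      | nil =>
        -- c is the last landmark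
        have hub : ∀ z ∈ R, z ≠ c → z ≤ b := by
          intro z hz hzc
          rcases hcomp z hz with h | h
          · exact h
          · rcases List.mem_cons.1 h with rfl | h2
            · exact absurd rfl hzc
            · simp at h2
        have hcend : n ≤ c + 1 := by
          by_contra hc2
          push_neg at hc2
          refine sym_nec hres hcR (t := 1) (by omega) (by omega) (by omega) ?_
          intro z hz hzc
          have := hub z hz hzc
          simp only [Nat.dist]; omega
        simp only [List.length_cons, List.length_nil]
        have hAv2 : Av k (0 + 1 + 1) = 2*k+2 := Av_two k
        rcases lt_or_eq_of_le hgap with hlt | heq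
        · omega
        · have := blx_pos n k R (show b < b+k+1 by omega) (hblgap heq)
          omega
      | cons c' t'' =>
        have hcc' : c < c' := hgt c' List.mem_cons_self
        have hc'R : c' ∈ R := hsubt' c' List.mem_cons_self
        have hc'n : c' < n := Finset.mem_range.1 (hsub hc'R)
        have htail' : List.Pairwise (· < ·) (c' :: t'') := htail.of_cons
        have hgt' : ∀ z ∈ t'', c' < z := fun _ hz => List.rel_of_pairwise_cons htail' hz
        have hcompc' : ∀ z ∈ R, z ≤ c' ∨ z ∈ t'' := by
          intro z hz
          rcases hcompc z hz with h | h
          · left; omega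
          · rcases List.mem_cons.1 h with rfl | h2
            · left; rfl
            · right; exact h2
        have hsubt'' : ∀ z ∈ t'', z ∈ R := fun z hz => hsubt' z (List.mem_cons_of_mem _ hz)
        have hg2 : c' - c ≤ k + 1 := by
          by_contra hc2
          push_neg at hc2
          refine sym_nec hres hcR (t := min (c - b) (c' - c) - (k+1)) (by omega) (by omega)
            (by omega) ?_
          intro z hz hzc
          rcases hcompc z hz with h | h
          · have hzb : z ≤ b := by
              rcases hcomp z hz with h2 | h2
              · exact h2
              · rcases List.mem_cons.1 h2 with rfl | h3
                · exact absurd rfl hzc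
                · exact absurd (hgt z h3) (by omega)
            simp only [Nat.dist]; omega
          · have := hgt z h
            have hzc' : c' ≤ z := by
              rcases List.mem_cons.1 h with rfl | h3
              · rfl
              · exact (hgt' z h3).le
            simp only [Nat.dist]; omega
        have haux := ih t''.length (by rw [← hlen]; simp [List.length_cons]) t'' c' rfl hc'R htail' hcompc' hsubt''
        have hstep := Av_step2 k (t''.length + 1) (by omega)
        have hEA : Av k (t''.length + 1 + 1 + 1) = Av k (t''.length + 1 + 2) := rfl
        simp only [List.length_cons]
        rcases lt_or_eq_of_le hgap with hlt | heq
        · have hmono := blx_mono n k R (show b ≤ c' by omega)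
          omega
        · have hbl1 := blx_pos n k R (show b < b+k+1 by omega) (hblgap heq)
          have hbl0 : blx n k R c' = 0 := by
            by_contra hc2
            obtain ⟨w, hw1, hw2⟩ := blx_spec n k R hc2
            have := blind_unique hres _ _ hw2 (hblgap heq)
            omega
          omega


lemma lower_main {n k : ℕ} {R : Finset ℕ} (hk : 1 ≤ k) (hn : 2 ≤ n)
    (hsub : R ⊆ Finset.range n) (hres : ResN n k R) :
    n ≤ Nv k R.card ∧ ((∀ v, ¬ BlindN n k R v) → n + 1 ≤ Nv k R.card) := by
  classical
  have hRne : R.Nonempty := by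
    obtain ⟨z, hz, -⟩ := hres 0 (by omega) 1 (by omega) (by omega)
    exact ⟨z, hz⟩
  obtain ⟨l, hl⟩ : ∃ l, R.sort (· ≤ ·) = l := ⟨_, rfl⟩
  have hsorted : l.Pairwise (· < ·) := by rw [← hl]; exact R.sortedLT_sort.pairwise
  have hmem : ∀ z, z ∈ R ↔ z ∈ l := by
    intro z; rw [← hl]; exact (Finset.mem_sort _).symm
  have hcard : R.card = l.length := by rw [← hl, Finset.length_sort]
  cases l with
  | nil =>
    exfalso
    obtain ⟨a, ha⟩ := hRne
    simpa using (hmem a).1 ha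
  | cons a t =>
    have haR : a ∈ R := (hmem a).2 List.mem_cons_self
    have han : a < n := Finset.mem_range.1 (hsub haR)
    have hgtat : ∀ z ∈ t, a < z := fun _ hz => List.rel_of_pairwise_cons hsorted hz
    have hmin : ∀ z ∈ R, a ≤ z := by
      intro z hz
      rcases List.mem_cons.1 ((hmem z).1 hz) with rfl | h
      · exact le_rfl
      · exact (hgtat z h).le
    have ha1 : a ≤ k + 1 := by
      by_contra hc
      push_neg at hc
      have h0 : BlindN n k R 0 := by
        refine ⟨by omega, fun z hz => ?_⟩
        have := hmin z hz
        simp only [Nat.dist]; omega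
      have h1 : BlindN n k R 1 := by
        refine ⟨by omega, fun z hz => ?_⟩
        have := hmin z hz
        simp only [Nat.dist]; omega
      have := blind_unique hres _ _ h0 h1
      omega
    have hbl0 : k + 1 ≤ a → BlindN n k R 0 := by
      intro hka
      refine ⟨by omega, fun z hz => ?_⟩
      have := hmin z hz
      simp only [Nat.dist]; omega
    have hanb : (∀ v, ¬ BlindN n k R v) → a ≤ k := by
      intro hnb
      by_contra hc
      exact hnb 0 (hbl0 (by omega))
    cases t with
    | nil =>
      -- single landmark
      have hub : ∀ z ∈ R, z = a := by
        intro z hz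
        rcases List.mem_cons.1 ((hmem z).1 hz) with rfl | h
        · rfl
        · simp at h
      have hends : a = 0 ∨ n ≤ a + 1 := by
        by_contra hc
        push_neg at hc
        refine sym_nec hres haR (t := 1) (by omega) (by omega) (by omega) ?_
        intro z hz hzc
        exact absurd (hub z hz) hzc
      have hcard1 : R.card = 1 := by rw [hcard]; rfl
      rw [hcard1, Nv_one]
      rcases hends with rfl | hend
      · -- a = 0 : n ≤ k+2, and blind analysis
        constructor
        · by_contra hc
          push_neg at hc
          have hv : BlindN n k R (k+1) := by
            refine ⟨by omega, fun z hz => ?_⟩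
            rw [hub z hz]
            simp only [Nat.dist]; omega
          have hw : BlindN n k R (k+2) := by
            refine ⟨by omega, fun z hz => ?_⟩
            rw [hub z hz]
            simp only [Nat.dist]; omega
          have := blind_unique hres _ _ hv hw
          omega
        · intro hnb
          by_contra hc
          push_neg at hc
          refine hnb (k+1) ⟨by omega, fun z hz => ?_⟩
          rw [hub z hz]
          simp only [Nat.dist]; omega
      · refine ⟨by omega, fun hnb => ?_⟩
        have := hanb hnb
        omega
    | cons c t' =>
      have hcR : c ∈ R := (hmem c).2 (by simp)
      have hcn : c < n := Finset.mem_range.1 (hsub hcR)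
      have hac : a < c := hgtat c (by simp)
      have htail : List.Pairwise (· < ·) (c :: t') := hsorted.of_cons
      have hcomp : ∀ z ∈ R, z ≤ c ∨ z ∈ t' := by
        intro z hz
        rcases List.mem_cons.1 ((hmem z).1 hz) with rfl | h
        · left; omega
        · rcases List.mem_cons.1 h with rfl | h2
          · left; rfl
          · right; exact h2
      have hsubt : ∀ z ∈ t', z ∈ R := by
        intro z hz
        exact (hmem z).2 (by simp [hz])
      have hcardm : R.card = t'.length + 2 := by rw [hcard]; rfl
      have hFA := Fv_eq_Av k (t'.length + 1) (by omega)
      have hNF := Nv_eq_Fv k (t'.length + 2)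
      have hE1 : Fv k (t'.length + 1 + 1) = Fv k (t'.length + 2) := rfl
      rcases le_or_gt (c - a) (k+1) with hsm | hbig
      · have haux := aux_pos hsub hres t'.length t' c rfl hcR htail hcomp hsubt
        have hexcl : a + blx n k R c ≤ k + 1 := by
          rcases le_or_gt a k with h | h
          · have := blx_le_one n k R c
            omega
          · have h0 := hbl0 (by omega)
            have : blx n k R c = 0 := by
              by_contra hc2
              obtain ⟨w, hw1, hw2⟩ := blx_spec n k R hc2
              have := blind_unique hres _ _ hw2 h0
              omega
            omega
        constructor
        · rw [hcardm]; omega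
        · intro hnb
          have hak := hanb hnb
          have hbz := blx_zero_of_noblind n k R hnb c
          rw [hcardm]; omega
      · have ha0 : a = 0 := by
          by_contra hc
          refine sym_nec hres haR (t := 1) (by omega) (by omega) (by omega) ?_
          intro z hz hzc
          have hzc2 : c ≤ z := by
            rcases List.mem_cons.1 ((hmem z).1 hz) with rfl | h
            · exact absurd rfl hzc
            · rcases List.mem_cons.1 h with rfl | h2
              · rfl
              · exact (List.rel_of_pairwise_cons htail h2).le
          simp only [Nat.dist]; omega
        have hcompa : ∀ z ∈ R, z ≤ a ∨ z ∈ c :: t' := by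
          intro z hz
          rcases List.mem_cons.1 ((hmem z).1 hz) with rfl | h
          · left; exact le_rfl
          · right; exact h
        have hsubca : ∀ z ∈ c :: t', z ∈ R := by
          intro z hz
          exact (hmem z).2 (List.mem_cons_of_mem _ hz)
        have haux := aux_pos hsub hres (c :: t').length (c :: t') a rfl haR hsorted hcompa hsubca
        have hAF := Av_le_Fv k ((c :: t').length + 1) (by simp)
        have hE2 : Av k ((c :: t').length + 1) = Av k (t'.length + 2) := by simp
        have hE3 : Fv k ((c :: t').length + 1) = Fv k (t'.length + 2) := by simp
        rw [hE2] at haux hAF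
        rw [hE3] at hAF
        have hbl1 := blx_le_one n k R a
        constructor
        · rw [hcardm]; omega
        · intro hnb
          have hbz := blx_zero_of_noblind n k R hnb a
          rw [hcardm]; omega


lemma noblind_of_dom {n k : ℕ} {R : Finset ℕ} (hdom : DomN n k R) :
    ∀ v, ¬ BlindN n k R v := by
  rintro v ⟨hv, hb⟩
  obtain ⟨z, hz, hzd⟩ := hdom v hv
  have := hb z hz
  omega

noncomputable def muN (k n : ℕ) : ℕ := sInf {m | n ≤ Nv k m}

lemma muN_spec (k n : ℕ) : n ≤ Nv k (muN k n) := by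
  have hne : {m | n ≤ Nv k m}.Nonempty := by
    refine ⟨2*n, ?_⟩
    have h1 : n ≤ n * (3*k+2) := Nat.le_mul_of_pos_right n (by omega)
    simp only [Set.mem_setOf_eq, Nv_even]
    omega
  exact Nat.sInf_mem hne

lemma muN_le (k n m : ℕ) (h : n ≤ Nv k m) : muN k n ≤ m := Nat.sInf_le h

lemma kdim_eq (n k : ℕ) (hn : 2 ≤ n) (hk : 1 ≤ k) :
    kdim (pathGraph n) k = muN k n := by
  rw [kdim, res_set_eq]
  apply le_antisymm
  · obtain ⟨R, hcon, hcard, -⟩ := con_exists k hk (muN k n) n (by omega) (muN_spec k n)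
    have hmem : R.card ∈ {m : ℕ | ∃ R : Finset ℕ, R ⊆ Finset.range n ∧ ResN n k R ∧ R.card = m} :=
      ⟨R, hcon.1, resN_of_con hcon, rfl⟩
    exact le_trans (Nat.sInf_le hmem) hcard
  · have hne : ∃ m, m ∈ {m : ℕ | ∃ R : Finset ℕ, R ⊆ Finset.range n ∧ ResN n k R ∧ R.card = m} := by
      obtain ⟨R, hcon, hcard, -⟩ := con_exists k hk (muN k n) n (by omega) (muN_spec k n)
      exact ⟨R.card, R, hcon.1, resN_of_con hcon, rfl⟩
    obtain ⟨m, hm⟩ := hne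
    have hmem := Nat.sInf_mem ⟨m, hm⟩
    obtain ⟨R, hsub, hres, hcard⟩ := hmem
    have := (lower_main hk hn hsub hres).1
    rw [hcard] at this
    exact muN_le k n _ this

lemma kld_eq (n k : ℕ) (hn : 2 ≤ n) (hk : 1 ≤ k) :
    kld (pathGraph n) k = muN k (n+1) := by
  rw [kld, ld_set_eq]
  have hc := con_exists k hk (muN k (n+1)) n (by omega)
    (le_trans (by omega) (muN_spec k (n+1)))
  obtain ⟨R, hcon, hcard, hdom⟩ := hc
  have hdom' : DomN n k R := hdom (by have := muN_spec k (n+1); omega)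
  apply le_antisymm
  · have hmem : R.card ∈ {m : ℕ | ∃ R : Finset ℕ,
        R ⊆ Finset.range n ∧ DomN n k R ∧ ResN n k R ∧ R.card = m} :=
      ⟨R, hcon.1, hdom', resN_of_con hcon, rfl⟩
    exact le_trans (Nat.sInf_le hmem) hcard
  · have hmem := Nat.sInf_mem (⟨R.card, R, hcon.1, hdom', resN_of_con hcon, rfl⟩ :
      ∃ m, m ∈ {m : ℕ | ∃ R : Finset ℕ,
        R ⊆ Finset.range n ∧ DomN n k R ∧ ResN n k R ∧ R.card = m})
    obtain ⟨R2, hsub2, hdom2, hres2, hcard2⟩ := hmem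
    have := (lower_main hk hn hsub2 hres2).2 (noblind_of_dom hdom2)
    rw [hcard2] at this
    exact muN_le k (n+1) _ this

lemma muN_pos (k n : ℕ) (hn : 2 ≤ n) : 1 ≤ muN k n := by
  by_contra hc
  have h0 : muN k n = 0 := by omega
  have := muN_spec k n
  rw [h0, Nv_zero] at this
  omega

lemma residue_iff (k n : ℕ) (hk : 1 ≤ k) (hn : 2 ≤ n) :
    (n % (3*k+2) = 1 ∨ n % (3*k+2) = k+2) ↔ Nv k (muN k n) = n := by
  constructor
  · rintro (h | h)
    · obtain ⟨j, hj⟩ : ∃ j, n = j * (3*k+2) + 1 := by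
        refine ⟨n / (3*k+2), ?_⟩
        have := Nat.div_add_mod n (3*k+2)
        have hcm : (3*k+2) * (n / (3*k+2)) = (n / (3*k+2)) * (3*k+2) := Nat.mul_comm _ _
        omega
      have hj1 : 1 ≤ j := by
        rcases Nat.eq_zero_or_pos j with rfl | h1
        · omega
        · exact h1
      have hNv : Nv k (2*j) = n := by rw [Nv_even, hj]
      have h1 : muN k n ≤ 2*j := muN_le k n _ (le_of_eq hNv.symm)
      have h2 := muN_spec k n
      by_contra hne
      have h3 : Nv k (2*j) < Nv k (muN k n) := by omega
      have := (Nv_strictMono k).lt_iff_lt.1 h3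
      omega
    · obtain ⟨j, hj⟩ : ∃ j, n = j * (3*k+2) + (k+2) := by
        refine ⟨n / (3*k+2), ?_⟩
        have := Nat.div_add_mod n (3*k+2)
        have hcm : (3*k+2) * (n / (3*k+2)) = (n / (3*k+2)) * (3*k+2) := Nat.mul_comm _ _
        omega
      have hNv : Nv k (2*j+1) = n := by rw [Nv_odd, hj]
      have h1 : muN k n ≤ 2*j+1 := muN_le k n _ (le_of_eq hNv.symm)
      have h2 := muN_spec k n
      by_contra hne
      have h3 : Nv k (2*j+1) < Nv k (muN k n) := by omega
      have := (Nv_strictMono k).lt_iff_lt.1 h3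
      omega
  · intro h
    obtain ⟨j, hj | hj⟩ := Nat.even_or_odd' (muN k n)
    · rw [hj, Nv_even] at h
      left
      have : n % (3*k+2) = (1 + j * (3*k+2)) % (3*k+2) := by rw [← h]; ring_nf
      rw [Nat.add_mul_mod_self_right] at this
      rw [this, Nat.mod_eq_of_lt (by omega)]
    · rw [hj, Nv_odd] at h
      right
      have : n % (3*k+2) = ((k+2) + j * (3*k+2)) % (3*k+2) := by rw [← h]; ring_nf
      rw [Nat.add_mul_mod_self_right] at this
      rw [this, Nat.mod_eq_of_lt (by omega)]

lemma muN_succ_of_eq (k n : ℕ) (h : Nv k (muN k n) = n) :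
    muN k (n+1) = muN k n + 1 := by
  have h2 := muN_spec k (n+1)
  have hmono : muN k n ≤ muN k (n+1) := muN_le k n _ (by omega)
  have hne : muN k (n+1) ≠ muN k n := by
    intro hc
    rw [hc, h] at h2
    omega
  have hub : muN k (n+1) ≤ muN k n + 1 := by
    apply muN_le
    have := Nv_succ_lt k (muN k n)
    omega
  omega

lemma muN_succ_of_ne (k n : ℕ) (h : Nv k (muN k n) ≠ n) :
    muN k (n+1) = muN k n := by
  have h1 := muN_spec k n
  have hmono : muN k n ≤ muN k (n+1) := muN_le k n _ (by have := muN_spec k (n+1); omega)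
  have hub : muN k (n+1) ≤ muN k n := muN_le k (n+1) _ (by omega)
  omega

/-- For the path `P_n` (`n ≥ 2`) and a positive integer `k`: if `n ≡ 1` or
`n ≡ k + 2 (mod 3k+2)` then `γ_L^k(P_n) = dim_k(P_n) + 1`; otherwise
`γ_L^k(P_n) = dim_k(P_n)`. -/
theorem stmt_15 (n : ℕ) (hn : 2 ≤ n) (k : ℕ) (hk : 1 ≤ k) :
    if n % (3 * k + 2) = 1 % (3 * k + 2) ∨ n % (3 * k + 2) = (k + 2) % (3 * k + 2) then
      kld (pathGraph n) k = kdim (pathGraph n) k + 1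
    else
      kld (pathGraph n) k = kdim (pathGraph n) k := by
  have h1 : (1 : ℕ) % (3 * k + 2) = 1 := Nat.mod_eq_of_lt (by omega)
  have h2 : (k + 2) % (3 * k + 2) = k + 2 := Nat.mod_eq_of_lt (by omega)
  rw [h1, h2, kld_eq n k hn hk, kdim_eq n k hn hk]
  by_cases hc : n % (3*k+2) = 1 ∨ n % (3*k+2) = k+2
  · rw [if_pos hc]
    exact muN_succ_of_eq k n ((residue_iff k n hk hn).1 hc)
  · rw [if_neg hc]
    refine muN_succ_of_ne k n ?_
    intro h
    exact hc ((residue_iff k n hk hn).2 h)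
end
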